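/- arXiv:2202.09866 — 5 statements merged into one kernel-verified Lean document; each statement's English description precedes it below -/
import Mathlib

section
/- Let q be a prime power, n a positive integer, and for each positive integer r let t_r = gcd(q^r - 1, n). Let v_d denote the number of distinct monic irreducible factors of degree d of x^n - 1 over F_q. Then v_d = (1/d) * sum over r dividing d of t_r * μ(d/r), where μ is the Möbius function. -/
open Polynomial IntermediateField

open scoped Classical

section Aux

variable {F : Type*} [Field F] [Fintype F]

local notation "Kbar" => AlgebraicClosure F

private lemma aux_pow_card_minpoly (x : Kbar) :
    x ^ (Fintype.card F) ^ (minpoly F x).natDegree = x := by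
  have hx : IsIntegral F x := Algebra.IsIntegral.isIntegral x
  haveI := IntermediateField.adjoin.finiteDimensional hx
  haveI : Finite (F⟮x⟯ : IntermediateField F Kbar) := Module.finite_of_finite F
  haveI : Fintype (F⟮x⟯ : IntermediateField F Kbar) := Fintype.ofFinite _
  have hcard : Fintype.card (F⟮x⟯ : IntermediateField F Kbar) =
      Fintype.card F ^ (minpoly F x).natDegree := by
    rw [Module.card_eq_pow_finrank (K := F), IntermediateField.adjoin.finrank hx]
  have hgen := FiniteField.pow_card (IntermediateField.AdjoinSimple.gen F x)
  rw [hcard] at hgen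
  have h2 := congrArg (algebraMap (F⟮x⟯ : IntermediateField F Kbar) Kbar) hgen
  simpa [map_pow, IntermediateField.AdjoinSimple.algebraMap_gen] using h2

private lemma aux_pow_dvd {M : Type*} [Monoid M] {x : M} {q e r : ℕ}
    (h : x ^ q ^ e = x) (hdvd : e ∣ r) : x ^ q ^ r = x := by
  obtain ⟨k, rfl⟩ := hdvd
  induction k with
  | zero => simp
  | succ k ih => rw [Nat.mul_succ, pow_add, pow_mul, ih, h]

private lemma aux_pow_eq_iff {x : AlgebraicClosure F} {r : ℕ} (hr : 0 < r) :
    x ^ (Fintype.card F) ^ r = x ↔ (minpoly F x).natDegree ∣ r := by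
  constructor
  · intro hxr
    set q := Fintype.card F with hqdef
    have hq1 : 1 < q := Fintype.one_lt_card
    obtain ⟨f, hp, hqf⟩ := FiniteField.card F (ringChar F)
    set p := ringChar F with hpdef
    haveI : Fact p.Prime := ⟨hp⟩
    have hfr : f.1 * r ≠ 0 := Nat.mul_ne_zero f.2.ne' hr.ne'
    have hqr : q ^ r = p ^ (f.1 * r) := by rw [hqdef, hqf]; exact (pow_mul p f.1 r).symm
    let φ : Kbar →+* Kbar := iterateFrobenius Kbar p (f.1 * r)
    have hφ : ∀ y : Kbar, φ y = y ^ q ^ r := fun y => by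
      rw [hqr]; simp [φ, iterateFrobenius_def]
    have hmem0 : ∀ y : Kbar, y ∈ RingHom.eqLocusField φ (RingHom.id Kbar) ↔ y ^ q ^ r = y :=
      fun y => by
        constructor
        · intro h; have : φ y = y := h; rwa [hφ] at this
        · intro h; show φ y = y; rwa [hφ]
    let S : IntermediateField F Kbar :=
      Subfield.toIntermediateField (RingHom.eqLocusField φ (RingHom.id Kbar)) (fun a => by
        rw [hmem0, ← map_pow, FiniteField.pow_card_pow])
    have hmem : ∀ y : Kbar, y ∈ S ↔ y ^ q ^ r = y := hmem0
    have hP : ((X : Kbar[X]) ^ q ^ r - X) ≠ 0 :=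
      FiniteField.X_pow_card_sub_X_ne_zero Kbar (Nat.one_lt_pow hr.ne' hq1)
    have hsetEq : (S : Set Kbar) = ((X : Kbar[X]) ^ q ^ r - X).rootSet Kbar := by
      ext y
      rw [SetLike.mem_coe, hmem, mem_rootSet]
      simp [hP, sub_eq_zero]
    have hcardS : Nat.card S = q ^ r := by
      have h1 : Fintype.card (((X : Kbar[X]) ^ q ^ r - X).rootSet Kbar) = q ^ r := by
        rw [card_rootSet_eq_natDegree (galois_poly_separable p (q ^ r)
            (by rw [hqr]; exact dvd_pow_self p hfr)) (IsAlgClosed.splits _),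
          FiniteField.X_pow_card_sub_X_natDegree_eq Kbar (Nat.one_lt_pow hr.ne' hq1)]
      rw [show Nat.card S = Nat.card (((X : Kbar[X]) ^ q ^ r - X).rootSet Kbar) from
        Nat.card_congr (Equiv.setCongr hsetEq), Nat.card_eq_fintype_card, h1]
    haveI : Finite S := Nat.finite_of_card_ne_zero (by rw [hcardS]; positivity)
    haveI : FiniteDimensional F S := Module.Finite.of_finite
    have hfin : Module.finrank F S = r := by
      haveI : Fintype S := Fintype.ofFinite _
      have h2 := Module.card_eq_pow_finrank (K := F) (V := S)
      rw [Fintype.card_eq_nat_card, hcardS] at h2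
      exact Nat.pow_right_injective hq1 h2.symm
    have hxS : x ∈ S := (hmem x).mpr hxr
    have hmp : minpoly F x = minpoly F (⟨x, hxS⟩ : S) := by
      have h3 := minpoly.algebraMap_eq (A := F) (B := S) (B' := Kbar) (algebraMap S Kbar).injective (⟨x, hxS⟩ : S)
      simpa using h3
    rw [hmp, ← hfin]
    exact minpoly.degree_dvd (IsIntegral.of_finite F _)
  · intro hdvd
    exact aux_pow_dvd (aux_pow_card_minpoly x) hdvd

private lemma aux_root {n r : ℕ} (hn : 0 < n) (hr : 0 < r) {g : F[X]} (hm : g.Monic)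
    (hirr : Irreducible g) (hdvd : g ∣ (X ^ n - 1 : F[X])) (hdeg : g.natDegree ∣ r)
    {x : Kbar} (hx : aeval x g = 0) :
    minpoly F x = g ∧ x ^ n = 1 ∧ x ^ (Fintype.card F) ^ r = x := by
  have hmin : minpoly F x = g := (minpoly.eq_of_irreducible_of_monic hirr hx hm).symm
  have hxn : x ^ n = 1 := by
    obtain ⟨h, hh⟩ := hdvd
    have h2 : aeval x ((X : F[X]) ^ n - 1) = 0 := by rw [hh, map_mul, hx, zero_mul]
    simp only [map_sub, map_pow, aeval_X, map_one, sub_eq_zero] at h2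
    exact h2
  exact ⟨hmin, hxn, (aux_pow_eq_iff hr).mpr (by rw [hmin]; exact hdeg)⟩

private lemma aux_mem_iff {n r : ℕ} (hn : 0 < n) (hr : 0 < r) {g : F[X]} :
    g ∈ (((nthRootsFinset n (1 : Kbar)).filter
        fun x => x ^ (Fintype.card F) ^ r = x).image (minpoly F)) ↔
      g.Monic ∧ Irreducible g ∧ g ∣ (X ^ n - 1 : F[X]) ∧ g.natDegree ∣ r := by
  constructor
  · intro hg
    obtain ⟨x, hx, rfl⟩ := Finset.mem_image.mp hg
    rw [Finset.mem_filter, mem_nthRootsFinset hn] at hx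
    have hint : IsIntegral F x := Algebra.IsIntegral.isIntegral x
    refine ⟨minpoly.monic hint, minpoly.irreducible hint, ?_, (aux_pow_eq_iff hr).mp hx.2⟩
    apply minpoly.dvd
    simp [hx.1]
  · rintro ⟨hm, hirr, hdvd, hdeg⟩
    have hdeg0 : 0 < (g.map (algebraMap F Kbar)).degree := by
      rw [degree_map]
      exact degree_pos_of_irreducible hirr
    obtain ⟨x, hx⟩ := IsAlgClosed.exists_root _ hdeg0.ne'
    have hx' : aeval x g = 0 := by rwa [aeval_def, ← eval_map]
    obtain ⟨hmin, hxn, hxr⟩ := aux_root hn hr hm hirr hdvd hdeg hx'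
    exact Finset.mem_image.mpr ⟨x, Finset.mem_filter.mpr
      ⟨(mem_nthRootsFinset hn _).mpr hxn, hxr⟩, hmin⟩

private lemma aux_fiber_card {n r : ℕ} (hn : 0 < n) (hr : 0 < r) {g : F[X]}
    (hg : g ∈ (((nthRootsFinset n (1 : Kbar)).filter
        fun x => x ^ (Fintype.card F) ^ r = x).image (minpoly F))) :
    (((nthRootsFinset n (1 : Kbar)).filter fun x => x ^ (Fintype.card F) ^ r = x).filter
        (fun x => minpoly F x = g)).card = g.natDegree := by
  obtain ⟨hm, hirr, hdvd, hdeg⟩ := (aux_mem_iff hn hr).mp hg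
  have hsep : (g.map (algebraMap F Kbar)).Separable :=
    (PerfectField.separable_of_irreducible hirr).map
  have hmapne : g.map (algebraMap F Kbar) ≠ 0 := (hm.map _).ne_zero
  have hfe : ((nthRootsFinset n (1 : Kbar)).filter fun x => x ^ (Fintype.card F) ^ r = x).filter
        (fun x => minpoly F x = g) = (g.map (algebraMap F Kbar)).roots.toFinset := by
    ext x
    simp only [Finset.mem_filter, Multiset.mem_toFinset, mem_roots hmapne, IsRoot,
      eval_map, ← aeval_def, mem_nthRootsFinset hn]
    constructor
    · rintro ⟨⟨hxn, hxr⟩, hg'⟩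
      rw [← hg']
      exact minpoly.aeval F x
    · intro hx
      obtain ⟨hmin, hxn, hxr⟩ := aux_root hn hr hm hirr hdvd hdeg hx
      exact ⟨⟨hxn, hxr⟩, hmin⟩
  rw [hfe, Multiset.toFinset_card_of_nodup (nodup_roots hsep),
    ← natDegree_map (algebraMap F Kbar)]
  exact (splits_iff_card_roots.mp (IsAlgClosed.splits _))

private lemma aux_count {n : ℕ} (hn : 0 < n) {r : ℕ} (hr : 0 < r) :
    ((nthRootsFinset n (1 : Kbar)).filter fun x => x ^ (Fintype.card F) ^ r = x).card =
      Nat.gcd ((Fintype.card F) ^ r - 1) n := by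
  set q := Fintype.card F with hqdef
  have hq1 : 1 < q := Fintype.one_lt_card
  set g := Nat.gcd (q ^ r - 1) n with hgdef
  have hg0 : 0 < g := Nat.gcd_pos_of_pos_right _ hn
  have hqr1 : 1 ≤ q ^ r := Nat.one_le_pow _ _ (by omega)
  -- the filtered set equals the set of g-th roots of unity
  have hEq : ((nthRootsFinset n (1 : Kbar)).filter fun x => x ^ q ^ r = x) =
      nthRootsFinset g (1 : Kbar) := by
    ext x
    rw [Finset.mem_filter, mem_nthRootsFinset hn, mem_nthRootsFinset hg0]
    constructor
    · rintro ⟨hxn, hxr⟩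
      have hx0 : x ≠ 0 := by
        intro h
        rw [h, zero_pow hn.ne'] at hxn
        exact zero_ne_one hxn
      have hx1 : x ^ (q ^ r - 1) = 1 := by
        have h2 : x ^ (q ^ r - 1) * x = 1 * x := by
          rw [one_mul, ← pow_succ, Nat.sub_add_cancel hqr1, hxr]
        exact mul_right_cancel₀ hx0 h2
      exact pow_gcd_eq_one.mpr ⟨hx1, hxn⟩
    · intro hxg
      constructor
      · obtain ⟨k, hk⟩ := Nat.gcd_dvd_right (q ^ r - 1) n
        rw [hk, pow_mul, ← hgdef, hxg, one_pow]
      · obtain ⟨k, hk⟩ := Nat.gcd_dvd_left (q ^ r - 1) n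
        have hx1 : x ^ (q ^ r - 1) = 1 := by rw [hk, pow_mul, ← hgdef, hxg, one_pow]
        calc x ^ q ^ r = x ^ (q ^ r - 1 + 1) := by rw [Nat.sub_add_cancel hqr1]
        _ = x := by rw [pow_succ, hx1, one_mul]
  rw [hEq]
  -- count g-th roots of unity in the algebraic closure
  obtain ⟨f, hp, hqf⟩ := FiniteField.card F (ringChar F)
  set p := ringChar F with hpdef
  haveI : Fact p.Prime := ⟨hp⟩
  have hcast : ((g : ℕ) : Kbar) ≠ 0 := by
    rw [Ne, CharP.cast_eq_zero_iff Kbar p]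
    intro hpg
    have hpq : p ∣ q ^ r := by
      rw [hqdef, hqf]
      exact dvd_pow (dvd_pow_self p f.2.ne') (by omega)
    have h1 : p ∣ 1 := by
      have := Nat.dvd_sub hpq (hpg.trans (Nat.gcd_dvd_left _ _))
      rwa [Nat.sub_sub_self hqr1] at this
    exact hp.one_lt.ne' (Nat.eq_one_of_dvd_one h1)
  haveI : NeZero ((g : ℕ) : Kbar) := ⟨hcast⟩
  obtain ⟨ζ, hζ⟩ := HasEnoughRootsOfUnity.exists_primitiveRoot Kbar g
  exact hζ.card_nthRootsFinset

private lemma aux_sum {n d : ℕ} (hn : 0 < n) (hd : 0 < d) {r : ℕ} (hrd : r ∣ d) (hr : 0 < r) :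
    Nat.gcd ((Fintype.card F) ^ r - 1) n =
      ∑ e ∈ r.divisors, e *
        ((((nthRootsFinset n (1 : Kbar)).filter fun x => x ^ (Fintype.card F) ^ d = x).image
            (minpoly F)).filter (fun g => g.natDegree = e)).card := by
  set q := Fintype.card F with hqdef
  set T := (nthRootsFinset n (1 : Kbar)).filter fun x => x ^ q ^ r = x with hT
  set B := T.image (minpoly F) with hB
  have h1 : T.card = ∑ g ∈ B, (T.filter fun x => minpoly F x = g).card :=
    Finset.card_eq_sum_card_fiberwise fun x hx => Finset.mem_image_of_mem _ hx
  have h2 : ∀ g ∈ B, (T.filter fun x => minpoly F x = g).card = g.natDegree :=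
    fun g hg => aux_fiber_card hn hr hg
  have h3 : T.card = ∑ g ∈ B, g.natDegree := by
    rw [h1]; exact Finset.sum_congr rfl h2
  have hmaps : ∀ g ∈ B, g.natDegree ∈ r.divisors := by
    intro g hg
    obtain ⟨hm, hirr, hdvd, hdeg⟩ := (aux_mem_iff hn hr).mp hg
    exact Nat.mem_divisors.mpr ⟨hdeg, hr.ne'⟩
  have h4 : ∑ g ∈ B, g.natDegree =
      ∑ e ∈ r.divisors, ∑ g ∈ B.filter (fun g => g.natDegree = e), g.natDegree :=
    (Finset.sum_fiberwise_of_maps_to hmaps _).symm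
  have h5 : ∀ e ∈ r.divisors, ∑ g ∈ B.filter (fun g => g.natDegree = e), g.natDegree =
      e * (B.filter (fun g => g.natDegree = e)).card := by
    intro e _
    rw [Finset.sum_congr rfl (fun g hg => (Finset.mem_filter.mp hg).2), Finset.sum_const,
      smul_eq_mul, mul_comm]
  have h6 : ∀ e ∈ r.divisors, B.filter (fun g => g.natDegree = e) =
      (((nthRootsFinset n (1 : Kbar)).filter fun x => x ^ q ^ d = x).image
          (minpoly F)).filter (fun g => g.natDegree = e) := by
    intro e he
    obtain ⟨her, -⟩ := Nat.mem_divisors.mp he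
    ext g
    rw [Finset.mem_filter, Finset.mem_filter, hB, aux_mem_iff hn hr, aux_mem_iff hn hd]
    constructor
    · rintro ⟨⟨hm, hirr, hdvd, -⟩, hdeg⟩
      exact ⟨⟨hm, hirr, hdvd, hdeg ▸ her.trans hrd⟩, hdeg⟩
    · rintro ⟨⟨hm, hirr, hdvd, -⟩, hdeg⟩
      exact ⟨⟨hm, hirr, hdvd, hdeg ▸ her⟩, hdeg⟩
  rw [← aux_count hn hr, ← hT, h3, h4]
  exact Finset.sum_congr rfl fun e he => by rw [h5 e he, h6 e he]

end Aux

/-- The number of distinct monic irreducible degree-`d` factors of `X^n - 1` over `F_q`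
is `(1/d) * ∑_{r ∣ d} gcd(q^r - 1, n) * μ(d/r)`. -/
theorem stmt0 (F : Type*) [Field F] [Fintype F] (q n d : ℕ)
    (hq : Fintype.card F = q) (hn : 0 < n) (hd : 0 < d) :
    (({g : F[X] | g.Monic ∧ Irreducible g ∧ g.natDegree = d ∧ g ∣ X ^ n - 1}).ncard : ℚ) =
      (1 / (d : ℚ)) * ∑ r ∈ d.divisors,
        ((Nat.gcd (q ^ r - 1) n : ℚ) * ((ArithmeticFunction.moebius (d / r) : ℤ) : ℚ)) := by
  classical
  subst hq
  set q := Fintype.card F with hqdef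
  set B := ((nthRootsFinset n (1 : AlgebraicClosure F)).filter
      fun x => x ^ q ^ d = x).image (minpoly F) with hB
  have hset : {g : F[X] | g.Monic ∧ Irreducible g ∧ g.natDegree = d ∧ g ∣ X ^ n - 1} =
      ↑(B.filter fun g => g.natDegree = d) := by
    ext g
    rw [Set.mem_setOf_eq, Finset.coe_filter, Set.mem_setOf_eq, hB, aux_mem_iff hn hd]
    constructor
    · rintro ⟨hm, hirr, hdeg, hdvd⟩
      exact ⟨⟨hm, hirr, hdvd, hdeg ▸ dvd_refl d⟩, hdeg⟩
    · rintro ⟨⟨hm, hirr, hdvd, -⟩, hdeg⟩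
      exact ⟨hm, hirr, hdeg, hdvd⟩
  rw [hset, Set.ncard_coe_finset]
  have hinv := (ArithmeticFunction.sum_eq_iff_sum_mul_moebius_eq_on (R := ℚ)
      (f := fun e => (e : ℚ) * ((B.filter fun g => g.natDegree = e).card : ℚ))
      (g := fun r => (Nat.gcd (q ^ r - 1) n : ℚ))
      {m | m ∣ d} (fun m m' hmm' hm' => hmm'.trans hm')).mp ?hyp d hd (dvd_refl d)
  case hyp =>
    intro r hr hrd
    have h := aux_sum (F := F) hn hd hrd hr
    exact_mod_cast h.symm
  rw [Nat.sum_divisorsAntidiagonal' (f := fun a b =>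
    ((ArithmeticFunction.moebius a : ℤ) : ℚ) * (Nat.gcd (q ^ b - 1) n : ℚ))] at hinv
  have hsum : ∑ r ∈ d.divisors,
      (Nat.gcd (q ^ r - 1) n : ℚ) * ((ArithmeticFunction.moebius (d / r) : ℤ) : ℚ) =
      (d : ℚ) * ((B.filter fun g => g.natDegree = d).card : ℚ) := by
    rw [← hinv]
    exact Finset.sum_congr rfl fun r _ => mul_comm _ _
  rw [hsum, one_div, inv_mul_cancel_left₀ (Nat.cast_ne_zero.mpr hd.ne' : (d : ℚ) ≠ 0)]
end

section
/- Let q be a power of a prime p, n = p^s * n_0 with gcd(n_0, p) = 1, and let d be the least positive integer with n_0 dividing q^d - 1. Then the number of distinct monic irreducible factors of x^n - 1 over F_q equals (1/d) * sum over r dividing d of gcd(q^r - 1, n) * φ(d/r), where φ is Euler's totient function. -/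
theorem aux_gcd_pow_sub_one (q : ℕ) (hq : 2 ≤ q) : ∀ a b : ℕ,
    Nat.gcd (q ^ a - 1) (q ^ b - 1) = q ^ Nat.gcd a b - 1 := by
  intro a
  induction a using Nat.strong_induction_on with
  | _ a ih =>
    intro b
    rcases Nat.eq_zero_or_pos a with rfl | ha
    · simp
    · have hdvd : (q ^ a - 1) ∣ q ^ (a * (b / a)) - 1 := by
        have := Nat.sub_dvd_pow_sub_pow (q ^ a) 1 (b / a)
        simpa [← pow_mul] using this
      obtain ⟨c, hc⟩ := hdvd
      have hu : 1 ≤ q ^ (b % a) := Nat.one_le_pow _ _ (by omega)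
      have hv : 1 ≤ q ^ (a * (b / a)) := Nat.one_le_pow _ _ (by omega)
      have hkey : q ^ b - 1 = (q ^ (b % a) - 1) + (q ^ (b % a) * c) * (q ^ a - 1) := by
        have hb : q ^ b = q ^ (b % a) * q ^ (a * (b / a)) := by
          rw [← pow_add, Nat.mod_add_div]
        have h2 : q ^ (b % a) * (q ^ (a * (b / a)) - 1) = q ^ b - q ^ (b % a) := by
          rw [Nat.mul_sub, hb]; ring_nf
        have h3 : q ^ (b % a) * c * (q ^ a - 1) = q ^ b - q ^ (b % a) := by
          rw [mul_assoc, mul_comm c, ← hc, h2]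
        have hub : q ^ (b % a) ≤ q ^ b := Nat.pow_le_pow_right (by omega) (Nat.mod_le b a)
        omega
      rw [hkey, Nat.gcd_add_mul_right_right, Nat.gcd_comm, ih (b % a) (Nat.mod_lt b ha) a,
        ← Nat.gcd_rec]


theorem aux_card_gcd (d r : ℕ) (hd : 0 < d) (hr : r ∣ d) :
    ((Finset.range d).filter (fun k => Nat.gcd k d = r)).card = Nat.totient (d / r) := by
  have hr0 : 0 < r := Nat.pos_of_dvd_of_pos hr hd
  rw [Nat.totient_eq_card_coprime]
  apply Finset.card_nbij' (i := fun k => k / r) (j := fun j => r * j)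
  · intro k hk
    simp only [Finset.coe_filter, Finset.mem_coe, Set.mem_setOf_eq, Finset.mem_filter, Finset.mem_range] at hk ⊢
    obtain ⟨hk1, hk2⟩ := hk
    have hrk : r ∣ k := hk2 ▸ Nat.gcd_dvd_left k d
    refine ⟨Nat.div_lt_div_of_lt_of_dvd hr hk1, ?_⟩
    have := Nat.coprime_div_gcd_div_gcd (m := d) (n := k) (by rw [Nat.gcd_comm]; omega)
    rwa [Nat.gcd_comm, hk2] at this
  · intro j hj
    simp only [Finset.coe_filter, Finset.mem_coe, Set.mem_setOf_eq, Finset.mem_filter, Finset.mem_range] at hj ⊢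
    obtain ⟨hj1, hj2⟩ := hj
    constructor
    · calc r * j < r * (d / r) := (Nat.mul_lt_mul_left hr0).mpr hj1
        _ = d := Nat.mul_div_cancel' hr
    · conv_lhs => rw [← Nat.mul_div_cancel' hr]
      rw [Nat.gcd_mul_left, Nat.Coprime.gcd_eq_one (Nat.Coprime.symm hj2), mul_one]
  · intro k hk
    simp only [Finset.coe_filter, Finset.mem_coe, Set.mem_setOf_eq, Finset.mem_filter, Finset.mem_range] at hk
    exact Nat.mul_div_cancel' (hk.2 ▸ Nat.gcd_dvd_left k d)
  · intro j hj
    exact Nat.mul_div_cancel_left j hr0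

theorem aux_sum_gcd (d : ℕ) (hd : 0 < d) (F : ℕ → ℕ) :
    ∑ k ∈ Finset.range d, F (Nat.gcd k d) =
      ∑ r ∈ d.divisors, F r * Nat.totient (d / r) := by
  classical
  rw [← Finset.sum_fiberwise_of_maps_to (g := fun k => Nat.gcd k d)
      (t := d.divisors) (fun k _ => Nat.mem_divisors.mpr ⟨Nat.gcd_dvd_right k d, hd.ne'⟩)]
  refine Finset.sum_congr rfl fun r hr => ?_
  rw [Finset.sum_congr rfl (fun k hk => ?_), Finset.sum_const, smul_eq_mul,
    aux_card_gcd d r hd (Nat.mem_divisors.mp hr).1, mul_comm]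
  · simp only [Finset.mem_filter] at hk
    rw [hk.2]


open Polynomial

set_option maxHeartbeats 1000000
set_option synthInstance.maxHeartbeats 1000000

theorem aux_count_s3 (F : Type*) [Field F] [Fintype F] (p n₀ d : ℕ) (hp : p.Prime)
    [CharP F p] (hcop : Nat.Coprime n₀ p) (hn₀ : 0 < n₀) (hd0 : 0 < d)
    (hdvd : n₀ ∣ Fintype.card F ^ d - 1) :
    ({g : F[X] | g.Monic ∧ Irreducible g ∧ g ∣ X ^ n₀ - 1}).ncard * d =
      ∑ k ∈ Finset.range d, Nat.gcd (Fintype.card F ^ k - 1) n₀ := by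
  classical
  haveI : NeZero d := ⟨hd0.ne'⟩
  haveI : Fact p.Prime := ⟨hp⟩
  set q := Fintype.card F with hqdef
  have hq2 : 2 ≤ q := Fintype.one_lt_card
  obtain ⟨f, _, hf⟩ := FiniteField.card F p
  set K := AlgebraicClosure F with hKdef
  haveI : CharP K p := charP_of_injective_algebraMap (algebraMap F K).injective p
  have hpn : ¬ (p ∣ n₀) := by
    intro h
    have h2 : p ∣ Nat.gcd n₀ p := Nat.dvd_gcd h dvd_rfl
    rw [hcop] at h2
    exact hp.one_lt.ne' (Nat.eq_one_of_dvd_one h2)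
  haveI hNZ : NeZero (n₀ : K) := ⟨fun h => hpn ((CharP.cast_eq_zero_iff K p n₀).mp h)⟩
  -- primitive n₀-th root of unity
  obtain ⟨ζ, hζroot⟩ : ∃ z : K, IsRoot (cyclotomic n₀ K) z := by
    apply IsAlgClosed.exists_root
    rw [degree_cyclotomic]
    exact_mod_cast (Nat.totient_pos.mpr hn₀).ne'
  have hζ : IsPrimitiveRoot ζ n₀ := (isRoot_cyclotomic_iff).mp hζroot
  -- the q-power Frobenius is an F-algebra endomorphism of K
  have hcF : ∀ c : F, c ^ q = c := fun c => FiniteField.pow_card c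
  have hfrobC : ∀ c : F, (algebraMap F K c) ^ q = algebraMap F K c := by
    intro c; rw [← map_pow, hcF]
  have hcomp : (iterateFrobenius K p f).comp (algebraMap F K) = algebraMap F K := by
    ext c
    simp only [RingHom.comp_apply, iterateFrobenius_def, ← hf]
    exact hfrobC c
  have haevalq : ∀ (z : K) (g : F[X]), aeval (z ^ q) g = (aeval z g) ^ q := by
    intro z g
    have h1 := hom_eval₂ g (algebraMap F K) (iterateFrobenius K p f) z
    rw [hcomp] at h1
    simp only [iterateFrobenius_def] at h1
    rw [show p ^ (f:ℕ) = q from hf.symm] at h1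
    rw [aeval_def, aeval_def]
    exact h1.symm
  -- roots of unity set
  set A := {x : K // x ∈ nthRootsFinset n₀ (1 : K)} with hAdef
  have hmemA : ∀ x : K, x ∈ nthRootsFinset n₀ (1 : K) ↔ x ^ n₀ = 1 :=
    fun x => mem_nthRootsFinset hn₀ 1
  have hcardA : Fintype.card A = n₀ := by
    rw [Fintype.card_coe, hζ.card_nthRootsFinset]
  -- periodicity
  have hqe : ∀ x : K, x ^ n₀ = 1 → ∀ e : ℕ, n₀ ∣ q ^ e - 1 → x ^ q ^ e = x := by
    intro x hx e he
    have h1 : orderOf x ∣ n₀ := orderOf_dvd_of_pow_eq_one hx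
    have h2 : x ^ (q ^ e - 1) = 1 := orderOf_dvd_iff_pow_eq_one.mp (h1.trans he)
    have h3 : 1 ≤ q ^ e := Nat.one_le_pow _ _ (by omega)
    calc x ^ q ^ e = x ^ (q ^ e - 1) * x := by
          rw [← pow_succ]; congr 1; omega
      _ = x := by rw [h2, one_mul]
  have hqd : ∀ x : K, x ^ n₀ = 1 → x ^ q ^ d = x := fun x hx => hqe x hx d hdvd
  have hper : ∀ x : K, x ^ n₀ = 1 → ∀ m : ℕ, x ^ q ^ m = x ^ q ^ (m % d) := by
    intro x hx m
    have hstep : ∀ t : ℕ, x ^ q ^ (d * t) = x := by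
      intro t
      induction t with
      | zero => simp
      | succ t ih =>
        rw [Nat.mul_succ, pow_add, pow_mul, ih]
        exact hqd x hx
    conv_lhs => rw [← Nat.div_add_mod m d]
    rw [pow_add, pow_mul, hstep]
  -- the action of ZMod d
  letI : SMul (Multiplicative (ZMod d)) A :=
    ⟨fun g x => ⟨(x : K) ^ q ^ (g.toAdd).val, by
      rw [hmemA, ← pow_mul, mul_comm, pow_mul, (hmemA _).mp x.2, one_pow]⟩⟩
  have hsmul_def : ∀ (g : Multiplicative (ZMod d)) (x : A),
      ((g • x : A) : K) = (x : K) ^ q ^ (g.toAdd).val := fun g x => rfl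
  letI : MulAction (Multiplicative (ZMod d)) A :=
    { one_smul := by
        intro x
        apply Subtype.ext
        rw [hsmul_def]
        norm_num
      mul_smul := by
        intro g h x
        apply Subtype.ext
        rw [hsmul_def, hsmul_def, hsmul_def, ← pow_mul, ← pow_add]
        show (x : K) ^ q ^ (Multiplicative.toAdd g + Multiplicative.toAdd h).val = _
        rw [ZMod.val_add, ← hper _ ((hmemA _).mp x.2), add_comm] }
  haveI : ∀ g : Multiplicative (ZMod d), Fintype (MulAction.fixedBy A g) :=
    fun g => Fintype.ofFinite _
  haveI : Fintype (Quotient (MulAction.orbitRel (Multiplicative (ZMod d)) A)) :=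
    Fintype.ofFinite _
  -- fixed point count
  have hfixcard : ∀ g : Multiplicative (ZMod d),
      Fintype.card (MulAction.fixedBy A g) = Nat.gcd (q ^ (g.toAdd).val - 1) n₀ := by
    intro g
    set k := (g.toAdd).val with hkdef
    set m := q ^ k - 1 with hmdef
    set g' := Nat.gcd m n₀ with hg'def
    have hqk1 : 1 ≤ q ^ k := Nat.one_le_pow _ _ (by omega)
    have hg'n : g' ∣ n₀ := Nat.gcd_dvd_right _ _
    have hg'm : g' ∣ m := Nat.gcd_dvd_left _ _
    have hg'pos : 0 < g' := Nat.gcd_pos_of_pos_right _ hn₀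
    have he : ∀ x : A, (g • x = x) ↔ (x : K) ^ g' = 1 := by
      intro x
      have hx : (x : K) ^ n₀ = 1 := (hmemA _).mp x.2
      have hx0 : (x : K) ≠ 0 := by
        intro h
        rw [h, zero_pow hn₀.ne'] at hx
        exact zero_ne_one hx
      constructor
      · intro h
        have h2 : (x : K) ^ q ^ k = x := congrArg Subtype.val h
        have h3 : (x : K) ^ m = 1 := by
          have h4 : (x : K) ^ m * x = 1 * x := by
            rw [one_mul, ← pow_succ]
            rw [show m + 1 = q ^ k by omega]
            exact h2
          exact mul_right_cancel₀ hx0 h4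
        exact orderOf_dvd_iff_pow_eq_one.mp
          (Nat.dvd_gcd (orderOf_dvd_of_pow_eq_one h3) (orderOf_dvd_of_pow_eq_one hx))
      · intro h
        have h3 : (x : K) ^ m = 1 := by
          rw [← Nat.div_mul_cancel hg'm, mul_comm, pow_mul, h, one_pow]
        apply Subtype.ext
        rw [hsmul_def, ← hkdef, show q ^ k = m + 1 by omega, pow_succ, h3, one_mul]
    have hprim : IsPrimitiveRoot (ζ ^ (n₀ / g')) g' :=
      hζ.pow hn₀ (Nat.div_mul_cancel hg'n).symm
    have e : MulAction.fixedBy A g ≃ {y : K // y ∈ nthRootsFinset g' (1 : K)} :=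
      { toFun := fun z => ⟨(z.1 : K), (mem_nthRootsFinset hg'pos 1).mpr ((he z.1).mp z.2)⟩
        invFun := fun y => ⟨⟨y.1, (hmemA _).mpr (by
            have := (mem_nthRootsFinset hg'pos 1).mp y.2
            rw [← Nat.div_mul_cancel hg'n, mul_comm, pow_mul, this, one_pow])⟩,
          (he _).mpr (by
            have := (mem_nthRootsFinset hg'pos 1).mp y.2
            exact this)⟩
        left_inv := fun z => by ext; rfl
        right_inv := fun y => by ext; rfl }
    rw [Fintype.card_congr e, Fintype.card_coe, hprim.card_nthRootsFinset]
  -- Burnside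
  have hburn := MulAction.sum_card_fixedBy_eq_card_orbits_mul_card_group
    (Multiplicative (ZMod d)) A
  have hcardG : Fintype.card (Multiplicative (ZMod d)) = d := by
    rw [Fintype.card_multiplicative, ZMod.card]
  have hsum : (∑ g : Multiplicative (ZMod d), Fintype.card (MulAction.fixedBy A g))
      = ∑ k ∈ Finset.range d, Nat.gcd (q ^ k - 1) n₀ := by
    rw [Finset.sum_congr rfl (fun g _ => hfixcard g)]
    refine Finset.sum_nbij' (fun g => (Multiplicative.toAdd g).val)
      (fun k => Multiplicative.ofAdd ((k : ℕ) : ZMod d)) ?_ ?_ ?_ ?_ ?_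
    · intro a _
      exact Finset.mem_range.mpr (ZMod.val_lt _)
    · intro k _
      exact Finset.mem_univ _
    · intro a _
      show Multiplicative.ofAdd (((Multiplicative.toAdd a).val : ℕ) : ZMod d) = a
      exact (ZMod.natCast_rightInverse a.toAdd).symm ▸ rfl
    · intro k hk
      simp only [toAdd_ofAdd]
      exact ZMod.val_natCast_of_lt (Finset.mem_range.mp hk)
    · intro a _
      rfl
  -- integrality
  have hint : ∀ x : K, x ^ n₀ = 1 → IsIntegral F x := by
    intro x hx
    refine ⟨X ^ n₀ - C 1, monic_X_pow_sub_C 1 hn₀.ne', ?_⟩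
    simp [hx]
  have haevalqk : ∀ (z : K) (g : F[X]) (k : ℕ), aeval z g = 0 → aeval (z ^ q ^ k) g = 0 := by
    intro z g k hz
    induction k with
    | zero => simpa using hz
    | succ k ih =>
      rw [pow_succ, pow_mul, haevalq, ih, zero_pow (by omega : q ≠ 0)]
  have hfrobCk : ∀ (c : F) (k : ℕ), (algebraMap F K c) ^ q ^ k = algebraMap F K c := by
    intro c k
    induction k with
    | zero => simp
    | succ k ih => rw [pow_succ, pow_mul, ih, hfrobC]
  have hiter : ∀ i : ℕ, (fun z : K => z ^ q ^ i) = ⇑(iterateFrobenius K p ((f : ℕ) * i)) := by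
    intro i
    funext z
    rw [iterateFrobenius_def, pow_mul, show p ^ (f : ℕ) = q from hf.symm]
  have hinj : ∀ i : ℕ, Function.Injective (fun z : K => z ^ q ^ i) := by
    intro i
    rw [hiter i]
    exact (iterateFrobenius K p ((f : ℕ) * i)).injective
  set D := {g : F[X] | g.Monic ∧ Irreducible g ∧ g ∣ X ^ n₀ - 1} with hDdef
  have hΦD : ∀ x : K, x ^ n₀ = 1 → minpoly F x ∈ D := by
    intro x hx
    refine ⟨minpoly.monic (hint x hx), minpoly.irreducible (hint x hx), minpoly.dvd F x ?_⟩
    simp [hx]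
  have hΦorbit : ∀ (x : A) (g : Multiplicative (ZMod d)),
      minpoly F ((g • x : A) : K) = minpoly F (x : K) := by
    intro x g
    have hx : (x : K) ^ n₀ = 1 := (hmemA _).mp x.2
    have hy : ((g • x : A) : K) ^ n₀ = 1 := (hmemA _).mp (g • x).2
    have h1 : aeval ((x : K) ^ q ^ (g.toAdd).val) (minpoly F (x : K)) = 0 :=
      haevalqk _ _ _ (minpoly.aeval F _)
    have hdvd2 : minpoly F ((g • x : A) : K) ∣ minpoly F (x : K) :=
      minpoly.dvd F _ (by rw [hsmul_def]; exact h1)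
    exact eq_of_monic_of_associated (minpoly.monic (hint _ hy)) (minpoly.monic (hint _ hx))
      ((minpoly.irreducible (hint _ hy)).associated_of_dvd
        (minpoly.irreducible (hint _ hx)) hdvd2)
  have hsurj : ∀ gp ∈ D, ∃ x : A, minpoly F (x : K) = gp := by
    intro gp hgp
    obtain ⟨hmon, hirr, hdv⟩ := hgp
    have hdeg : (gp.map (algebraMap F K)).degree ≠ 0 := by
      rw [degree_map, degree_eq_natDegree hmon.ne_zero]
      exact_mod_cast hirr.natDegree_pos.ne'
    obtain ⟨x, hxroot⟩ := IsAlgClosed.exists_root _ hdeg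
    have haev : aeval x gp = 0 := by rwa [aeval_def, ← eval_map]
    have hxA : x ^ n₀ = 1 := by
      obtain ⟨c, hc⟩ := hdv
      have h1 : aeval x ((X : F[X]) ^ n₀ - 1) = 0 := by rw [hc, map_mul, haev, zero_mul]
      have h2 : x ^ n₀ - 1 = 0 := by simpa using h1
      rwa [sub_eq_zero] at h2
    exact ⟨⟨x, (hmemA x).mpr hxA⟩, (minpoly.eq_of_irreducible_of_monic hirr haev hmon).symm⟩
  -- fibers are orbits
  have hfiber : ∀ x y : A, minpoly F ((y : A) : K) = minpoly F ((x : A) : K) →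
      y ∈ MulAction.orbit (Multiplicative (ZMod d)) x := by
    intro x y hxy
    have hx : (x : K) ^ n₀ = 1 := (hmemA _).mp x.2
    have hy : (y : K) ^ n₀ = 1 := (hmemA _).mp y.2
    have hintx := hint _ hx
    set gp := minpoly F ((x : A) : K) with hgpdef
    set mdeg := gp.natDegree with hmdegdef
    have hex : ∃ l, 0 < l ∧ (x : K) ^ q ^ l = x := ⟨d, hd0, hqd _ hx⟩
    set l := Nat.find hex with hldef
    obtain ⟨hl0, hxl⟩ := Nat.find_spec hex
    have hlmin : ∀ j, 0 < j → (x : K) ^ q ^ j = x → l ≤ j :=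
      fun j h1 h2 => Nat.find_le ⟨h1, h2⟩
    have hkey : ∀ i j : ℕ, i < j → j < l → (x : K) ^ q ^ i ≠ (x : K) ^ q ^ j := by
      intro i j hij hjl heq
      have h1 : ((x : K) ^ q ^ (j - i)) ^ q ^ i = (x : K) ^ q ^ i := by
        rw [← pow_mul, ← pow_add, show (j - i) + i = j by omega]
        exact heq.symm
      have h2 : (x : K) ^ q ^ (j - i) = x := hinj i h1
      have := hlmin (j - i) (by omega) h2
      omega
    have hgp0 : gp ≠ 0 := (minpoly.monic hintx).ne_zero
    have hmap0 : gp.map (algebraMap F K) ≠ 0 := Polynomial.map_ne_zero hgp0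
    set Rt := (gp.map (algebraMap F K)).roots.toFinset with hRtdef
    have hRtcard : Rt.card ≤ mdeg := by
      calc Rt.card ≤ Multiset.card (gp.map (algebraMap F K)).roots :=
            Multiset.toFinset_card_le _
        _ ≤ (gp.map (algebraMap F K)).natDegree := card_roots' _
        _ = mdeg := natDegree_map _
    set O : Finset K := (Finset.range l).image (fun j => (x : K) ^ q ^ j) with hOdef
    have hOcard : O.card = l := by
      rw [hOdef, Finset.card_image_of_injOn, Finset.card_range]
      intro i hi j hj hij
      rcases lt_trichotomy i j with h | h | h
      · exact absurd hij (hkey i j h (by simpa using hj))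
      · exact h
      · exact absurd hij.symm (hkey j i h (by simpa using hi))
    have hOR : O ⊆ Rt := by
      intro z hz
      obtain ⟨j, _, rfl⟩ := Finset.mem_image.mp hz
      rw [Multiset.mem_toFinset, mem_roots hmap0]
      have h1 := haevalqk (x : K) gp j (minpoly.aeval F _)
      rwa [IsRoot.def, eval_map, ← aeval_def]
    have hml : mdeg ≤ l := by
      let ψ : K →ₐ[F] K :=
        { toRingHom := iterateFrobenius K p ((f : ℕ) * l)
          commutes' := fun c => by
            show iterateFrobenius K p ((f : ℕ) * l) (algebraMap F K c) = algebraMap F K c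
            have h1 : iterateFrobenius K p ((f : ℕ) * l) (algebraMap F K c)
                = (algebraMap F K c) ^ q ^ l := (congr_fun (hiter l) _).symm
            rw [h1, hfrobCk c l] }
      have hψ : ∀ z : K, ψ z = z ^ q ^ l := fun z => (congr_fun (hiter l) z).symm
      have hxmem : (x : K) ∈ AlgHom.equalizer ψ (AlgHom.id F K) := by
        show ψ (x : K) = (x : K)
        rw [hψ, hxl]
      have hadj : Algebra.adjoin F {((x : A) : K)} ≤ AlgHom.equalizer ψ (AlgHom.id F K) :=
        Algebra.adjoin_le (Set.singleton_subset_iff.mpr hxmem)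
      set T : Set K := {z : K | z ^ q ^ l = z} with hTdef
      set P : K[X] := X ^ q ^ l - X with hPdef
      have hql : 2 ≤ q ^ l := Nat.one_lt_pow hl0.ne' (by omega : 1 < q)
      have hPdeg : P.natDegree = q ^ l := by
        rw [hPdef]
        have h2 : (X : K[X]).natDegree < ((X : K[X]) ^ q ^ l).natDegree := by
          rw [natDegree_X, natDegree_X_pow]; omega
        rw [natDegree_sub_eq_left_of_natDegree_lt h2, natDegree_X_pow]
      have hP0 : P ≠ 0 := by
        intro h
        rw [h, natDegree_zero] at hPdeg
        omega
      have hTsub : T ⊆ {z : K | IsRoot P z} := by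
        intro z hz
        simp only [hTdef, Set.mem_setOf_eq] at hz ⊢
        rw [IsRoot.def, hPdef, eval_sub, eval_pow, eval_X, hz, sub_self]
      have hTfin : T.Finite := Set.Finite.subset (finite_setOf_isRoot hP0) hTsub
      haveI : Finite ↥T := hTfin.to_subtype
      have hTcard : Nat.card ↥T ≤ q ^ l := by
        have h1 : T ⊆ ↑(P.roots.toFinset) := by
          intro z hz
          rw [Finset.mem_coe, Multiset.mem_toFinset, mem_roots hP0]
          exact hTsub hz
        calc Nat.card ↥T = T.ncard := Nat.card_coe_set_eq T
          _ ≤ (↑(P.roots.toFinset) : Set K).ncard :=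
              Set.ncard_le_ncard h1 (Finset.finite_toSet _)
          _ = P.roots.toFinset.card := Set.ncard_coe_finset _
          _ ≤ Multiset.card P.roots := Multiset.toFinset_card_le _
          _ ≤ P.natDegree := card_roots' P
          _ = q ^ l := hPdeg
      let pb := Algebra.adjoin.powerBasis hintx
      haveI : Fintype ↥(Algebra.adjoin F {((x : A) : K)}) := Module.fintypeOfFintype pb.basis
      have hcardB : Nat.card ↥(Algebra.adjoin F {((x : A) : K)}) = q ^ mdeg := by
        rw [Nat.card_eq_fintype_card, Module.card_fintype pb.basis, Fintype.card_fin]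
        rw [show pb.dim = mdeg from Algebra.adjoin.powerBasis_dim hintx]
      have hinj2 : Function.Injective
          (fun z : ↥(Algebra.adjoin F {((x : A) : K)}) => (⟨z.1, by
            have h2 := hadj z.2
            have h3 : ψ z.1 = z.1 := h2
            rw [hψ] at h3
            exact h3⟩ : ↥T)) := by
        intro a b hab
        have := congrArg Subtype.val hab
        exact Subtype.ext this
      have h5 := Nat.card_le_card_of_injective _ hinj2
      rw [hcardB] at h5
      exact (Nat.pow_le_pow_iff_right (by omega : 1 < q)).mp (le_trans h5 hTcard)
    have hlR : l ≤ Rt.card := hOcard ▸ Finset.card_le_card hOR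
    have hOR2 : O = Rt := Finset.eq_of_subset_of_card_le hOR (by omega)
    have hyR : (y : K) ∈ Rt := by
      rw [Multiset.mem_toFinset, mem_roots hmap0, IsRoot.def, eval_map, ← aeval_def,
        ← hxy]
      exact minpoly.aeval F _
    rw [← hOR2] at hyR
    obtain ⟨j, _, hyx⟩ := Finset.mem_image.mp hyR
    rw [MulAction.mem_orbit_iff]
    refine ⟨Multiplicative.ofAdd ((j : ℕ) : ZMod d), ?_⟩
    apply Subtype.ext
    rw [hsmul_def]
    simp only [toAdd_ofAdd, ZMod.val_natCast]
    rw [← hper _ hx j]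
    exact hyx
  -- assemble
  let Φ : A → F[X] := fun x => minpoly F (x : K)
  let Ψ : Quotient (MulAction.orbitRel (Multiplicative (ZMod d)) A) → F[X] :=
    Quotient.lift Φ (fun a b hab => by
      obtain ⟨g, rfl⟩ := MulAction.mem_orbit_iff.mp hab
      exact hΦorbit b g)
  have hΨinj : Function.Injective Ψ := by
    intro a b
    obtain ⟨x, rfl⟩ := Quotient.exists_rep a
    obtain ⟨y, rfl⟩ := Quotient.exists_rep b
    intro h
    exact Quotient.sound (hfiber y x h)
  have hrange : D = Set.range Ψ := by
    ext gp
    constructor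
    · intro hgp
      obtain ⟨x, hx⟩ := hsurj gp hgp
      exact ⟨⟦x⟧, hx⟩
    · rintro ⟨a, rfl⟩
      obtain ⟨x, rfl⟩ := Quotient.exists_rep a
      exact hΦD _ ((hmemA _).mp x.2)
  rw [hrange, ← Nat.card_coe_set_eq, Nat.card_range_of_injective hΨinj,
    Nat.card_eq_fintype_card, ← hsum, hburn, hcardG]


/-- The number of distinct monic irreducible factors of `x^n - 1` over `F_q`, where
`n = p^s * n₀` with `gcd(n₀, p) = 1` and `d` is the least positive integer with
`n₀ ∣ q^d - 1`, equals `(1/d) * ∑_{r ∣ d} gcd(q^r - 1, n) * φ(d/r)`. -/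
theorem stmt3 (F : Type*) [Field F] [Fintype F] (p s n₀ n q d : ℕ) (hp : p.Prime)
    [CharP F p] (hq : Fintype.card F = q) (hcop : Nat.Coprime n₀ p) (hn₀ : 0 < n₀)
    (hn : n = p ^ s * n₀)
    (hd : 0 < d ∧ n₀ ∣ q ^ d - 1 ∧ ∀ e, 0 < e → n₀ ∣ q ^ e - 1 → d ≤ e) :
    (({g : F[X] | g.Monic ∧ Irreducible g ∧ g ∣ X ^ n - 1}).ncard : ℚ) =
      (1 / (d : ℚ)) * ∑ r ∈ d.divisors,
        (Nat.gcd (q ^ r - 1) n : ℚ) * (Nat.totient (d / r) : ℚ) := by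
  classical
  obtain ⟨hd0, hdvd, -⟩ := hd
  subst hq
  subst hn
  haveI : Fact p.Prime := ⟨hp⟩
  have hq2 : 2 ≤ Fintype.card F := Fintype.one_lt_card
  -- reduce X^(p^s*n₀) - 1 to X^n₀ - 1
  have hps : (X : F[X]) ^ (p ^ s * n₀) - 1 = ((X : F[X]) ^ n₀ - 1) ^ p ^ s := by
    rw [sub_pow_char_pow, one_pow, ← pow_mul, mul_comm]
  have hsets : {g : F[X] | g.Monic ∧ Irreducible g ∧ g ∣ X ^ (p ^ s * n₀) - 1}
      = {g : F[X] | g.Monic ∧ Irreducible g ∧ g ∣ X ^ n₀ - 1} := by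
    ext g
    simp only [Set.mem_setOf_eq, hps]
    constructor
    · rintro ⟨h1, h2, h3⟩
      exact ⟨h1, h2, h2.prime.dvd_of_dvd_pow h3⟩
    · rintro ⟨h1, h2, h3⟩
      exact ⟨h1, h2, h3.trans (dvd_pow_self _ (pow_ne_zero s hp.pos.ne'))⟩
  have hmain := aux_count_s3 F p n₀ d hp hcop hn₀ hd0 hdvd
  rw [hsets] at *
  -- arithmetic
  have h1 : ∀ k, Nat.gcd (Fintype.card F ^ k - 1) n₀
      = Nat.gcd (Fintype.card F ^ Nat.gcd k d - 1) n₀ := by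
    intro k
    conv_lhs => rw [← Nat.gcd_eq_right hdvd, ← Nat.gcd_assoc,
      aux_gcd_pow_sub_one _ hq2]
  have h2 : (∑ k ∈ Finset.range d, Nat.gcd (Fintype.card F ^ k - 1) n₀)
      = ∑ r ∈ d.divisors, Nat.gcd (Fintype.card F ^ r - 1) n₀ * Nat.totient (d / r) := by
    rw [Finset.sum_congr rfl (fun k _ => h1 k)]
    exact aux_sum_gcd d hd0 (fun r => Nat.gcd (Fintype.card F ^ r - 1) n₀)
  have h3 : ∀ r ∈ d.divisors,
      Nat.gcd (Fintype.card F ^ r - 1) (p ^ s * n₀) = Nat.gcd (Fintype.card F ^ r - 1) n₀ := by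
    intro r hr
    obtain ⟨hrd, -⟩ := Nat.mem_divisors.mp hr
    have hr0 : 0 < r := Nat.pos_of_dvd_of_pos hrd hd0
    have hpq : p ∣ Fintype.card F := by
      obtain ⟨f, -, hf⟩ := FiniteField.card F p
      exact hf ▸ dvd_pow_self p f.2.ne'
    have hqr1 : 1 ≤ Fintype.card F ^ r := Nat.one_le_pow _ _ (by omega)
    have hcop2 : Nat.Coprime (p ^ s) (Fintype.card F ^ r - 1) := by
      apply Nat.Coprime.pow_left
      rw [hp.coprime_iff_not_dvd]
      intro hpd
      have hd2 : p ∣ Fintype.card F ^ r := hpq.trans (dvd_pow_self _ hr0.ne')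
      have hd3 : p ∣ 1 := by
        have := Nat.dvd_sub hd2 hpd
        rwa [show Fintype.card F ^ r - (Fintype.card F ^ r - 1) = 1 by omega] at this
      exact hp.one_lt.ne' (Nat.eq_one_of_dvd_one hd3)
    exact Nat.Coprime.gcd_mul_left_cancel_right n₀ hcop2
  have key : ({g : F[X] | g.Monic ∧ Irreducible g ∧ g ∣ X ^ n₀ - 1}).ncard * d
      = ∑ r ∈ d.divisors,
          Nat.gcd (Fintype.card F ^ r - 1) (p ^ s * n₀) * Nat.totient (d / r) := by
    rw [hmain, h2]
    exact (Finset.sum_congr rfl (fun r hr => by rw [h3 r hr])).symm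
  have hd0' : (d : ℚ) ≠ 0 := Nat.cast_ne_zero.mpr hd0.ne'
  rw [one_div_mul_eq_div, eq_div_iff hd0']
  exact_mod_cast congrArg (fun m : ℕ => (m : ℚ)) key
end

section
/- Let q be a power of a prime p, n = p^s * n_0 with gcd(n_0, p) = 1, and d the least positive integer with q^d ≡ 1 (mod n_0). Let v_r be the number of distinct monic irreducible degree-r factors of x^n - 1 over F_q. Then Φ_q(x^n - 1) = q^{n - n_0} * product over r dividing d of (q^r - 1)^{v_r}. -/
set_option maxHeartbeats 1000000
set_option synthInstance.maxHeartbeats 400000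

open Polynomial

section Aux

/-- Units of a product of monoids. -/
def myPiUnits {ι : Type*} {M : ι → Type*} [∀ i, Monoid (M i)] :
    (∀ i, M i)ˣ ≃* ∀ i, (M i)ˣ where
  toFun u i := ⟨u.val i, u.inv i, congrFun u.val_inv i, congrFun u.inv_val i⟩
  invFun x := ⟨fun i => x i, fun i => (x i).inv,
    by ext i; exact (x i).val_inv, by ext i; exact (x i).inv_val⟩
  left_inv u := by ext i; rfl
  right_inv x := by ext i; rfl
  map_mul' u v := by ext i; rfl

lemma my_dvd_aux {q r : ℕ} (hq : 2 ≤ q) (hr : 0 < r) :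
    ∀ d, q ^ r - 1 ∣ q ^ d - 1 → r ∣ d := by
  intro d
  induction d using Nat.strong_induction_on with
  | _ d ih =>
    intro h
    rcases lt_or_ge d r with hdr | hdr
    · rcases Nat.eq_zero_or_pos d with rfl | hd0
      · exact dvd_zero r
      · exfalso
        have h1 : 1 < q ^ d := Nat.one_lt_pow hd0.ne' hq
        have h2 : q ^ d < q ^ r := Nat.pow_lt_pow_right hq hdr
        have := Nat.le_of_dvd (by omega) h
        omega
    · have key : q ^ r - 1 ∣ q ^ (d - r) - 1 := by
        have h1 : q ^ r - 1 ∣ q ^ (d - r) * (q ^ r - 1) := dvd_mul_left _ _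
        have h2 := Nat.dvd_sub h h1
        have e1 : q ^ (d - r) * q ^ r = q ^ d := by
          rw [← pow_add]; congr 1; omega
        have h3 : 1 ≤ q ^ (d - r) := Nat.one_le_pow _ _ (by omega)
        have h4 : q ^ (d - r) ≤ q ^ d := Nat.pow_le_pow_right (by omega) (by omega)
        have e2 : q ^ (d - r) * (q ^ r - 1) = q ^ d - q ^ (d - r) := by
          rw [Nat.mul_sub, e1, mul_one]
        have e3 : q ^ d - 1 - (q ^ (d - r) * (q ^ r - 1)) = q ^ (d - r) - 1 := by
          omega
        rwa [e3] at h2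
      obtain ⟨c, hc⟩ := ih (d - r) (by omega) key
      exact ⟨c + 1, by rw [Nat.mul_succ]; omega⟩

lemma myCardQuot (F : Type*) [Field F] [Fintype F] (h : F[X]) (h0 : h ≠ 0) :
    Nat.card (F[X] ⧸ Ideal.span {h}) = Fintype.card F ^ h.natDegree := by
  have e : Nat.card (F[X] ⧸ Ideal.span {h}) = Nat.card (AdjoinRoot h) := rfl
  rw [e]
  let pb := AdjoinRoot.powerBasis h0
  have hfin : Module.Finite F (AdjoinRoot h) := pb.finite
  have : Finite (AdjoinRoot h) := Module.finite_of_finite F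
  have : Fintype (AdjoinRoot h) := Fintype.ofFinite _
  rw [Nat.card_eq_fintype_card, Module.card_eq_pow_finrank (K := F), pb.finrank]
  rfl

lemma myFiniteQuot (F : Type*) [Field F] [Fintype F] (h : F[X]) (h0 : h ≠ 0) :
    Finite (F[X] ⧸ Ideal.span {h}) := by
  have : Module.Finite F (AdjoinRoot h) := (AdjoinRoot.powerBasis h0).finite
  have : Finite (AdjoinRoot h) := Module.finite_of_finite F
  exact this

noncomputable def myUnitsEquiv (A : Type*) [Monoid A] : Aˣ ≃ {x : A // IsUnit x} where
  toFun u := ⟨u, u.isUnit⟩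
  invFun x := x.2.unit
  left_inv u := Units.ext u.isUnit.unit_spec
  right_inv x := Subtype.ext x.2.unit_spec

lemma myCardUnitsQuot (F : Type*) [Field F] [Fintype F] (g : F[X]) (hi : Irreducible g)
    (e : ℕ) (he : 0 < e) :
    Nat.card (F[X] ⧸ Ideal.span {g ^ e})ˣ =
      Fintype.card F ^ (g.natDegree * e) - Fintype.card F ^ (g.natDegree * (e - 1)) := by
  classical
  set q := Fintype.card F with hq
  have hg0 : g ≠ 0 := hi.ne_zero
  set I : Ideal F[X] := Ideal.span {g ^ e} with hI
  set J : Ideal F[X] := Ideal.span {g} with hJ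
  have hle : I ≤ J := by
    rw [hI, hJ, Ideal.span_singleton_le_span_singleton]
    exact dvd_pow_self g he.ne'
  set A := F[X] ⧸ I with hA
  set B := F[X] ⧸ J with hB
  have finA : Finite A := myFiniteQuot F _ (pow_ne_zero e hg0)
  have finB : Finite B := myFiniteQuot F _ hg0
  set φ : A →+* B := Ideal.Quotient.factor hle with hphi
  have hφmk : ∀ a : F[X], φ (Ideal.Quotient.mk I a) = Ideal.Quotient.mk J a := fun a =>
    Ideal.Quotient.factor_mk hle a
  have hφsurj : Function.Surjective φ := by
    intro b
    obtain ⟨a, rfl⟩ := Ideal.Quotient.mk_surjective b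
    exact ⟨Ideal.Quotient.mk I a, hφmk a⟩
  have key : ∀ x : A, IsUnit x ↔ φ x ≠ 0 := by
    intro x
    obtain ⟨a, rfl⟩ := Ideal.Quotient.mk_surjective x
    rw [hφmk, Ne, Ideal.Quotient.eq_zero_iff_mem, hJ, Ideal.mem_span_singleton]
    constructor
    · rintro hu hdvd
      obtain ⟨b, hb⟩ := isUnit_iff_exists_inv.mp hu
      obtain ⟨b', rfl⟩ := Ideal.Quotient.mk_surjective b
      rw [← map_mul] at hb
      have h1 : a * b' - 1 ∈ I := by
        rwa [← Ideal.Quotient.eq_zero_iff_mem, map_sub, map_one, sub_eq_zero]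
      rw [hI, Ideal.mem_span_singleton] at h1
      have h2 : g ∣ a * b' - 1 := (dvd_pow_self g he.ne').trans h1
      have h3 : g ∣ 1 := by
        have h4 : g ∣ a * b' := hdvd.mul_right b'
        have h5 := h4.sub h2
        simpa using h5
      exact hi.not_isUnit (isUnit_of_dvd_one h3)
    · intro hnd
      have hc : IsCoprime (g ^ e) a := (hi.coprime_iff_not_dvd.mpr hnd).pow_left
      obtain ⟨u, v, huv⟩ := hc
      refine isUnit_iff_exists_inv.mpr ⟨Ideal.Quotient.mk I v, ?_⟩
      rw [← map_mul, ← map_one (Ideal.Quotient.mk I), Ideal.Quotient.mk_eq_mk_iff_sub_mem]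
      have hav : a * v - 1 = -(u * g ^ e) := by linear_combination huv
      rw [hav, hI]
      exact neg_mem (Ideal.mem_span_singleton.mpr (Dvd.intro_left u rfl))
  have cardA : Nat.card A = q ^ (g.natDegree * e) := by
    rw [hA, hI, myCardQuot F _ (pow_ne_zero e hg0), natDegree_pow, mul_comm e]
  have cardB : Nat.card B = q ^ g.natDegree := myCardQuot F _ hg0
  have cardquot : Nat.card (A ⧸ (RingHom.ker φ : Ideal A)) = q ^ g.natDegree := by
    rw [Nat.card_congr (RingHom.quotientKerEquivOfSurjective hφsurj).toEquiv]
    exact cardB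
  have cardker_rel := Submodule.card_eq_card_quotient_mul_card (RingHom.ker φ : Ideal A)
  have cardker : Nat.card (RingHom.ker φ) = q ^ (g.natDegree * (e - 1)) := by
    have hqpos : 0 < q ^ g.natDegree := Nat.pow_pos Fintype.card_pos
    have hrel : q ^ (g.natDegree * e) = Nat.card (RingHom.ker φ) * q ^ g.natDegree := by
      rw [← cardA, ← cardquot]
      exact cardker_rel
    have hsplit : g.natDegree * e = g.natDegree * (e - 1) + g.natDegree := by
      cases e with
      | zero => omega
      | succ e' => simp [Nat.mul_succ]
    rw [hsplit, pow_add] at hrel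
    exact (Nat.eq_of_mul_eq_mul_right hqpos hrel.symm)
  have e1 : Nat.card Aˣ = Nat.card {x : A // IsUnit x} := Nat.card_congr (myUnitsEquiv A)
  have e2 : Nat.card {x : A // ¬ IsUnit x} = Nat.card (RingHom.ker φ) := by
    refine Nat.card_congr (Equiv.subtypeEquivRight fun x => ?_)
    rw [key x, not_not, RingHom.mem_ker]
  have : Fintype A := Fintype.ofFinite A
  have e3 : Fintype.card {x : A // ¬ IsUnit x} = Fintype.card A - Fintype.card {x : A // IsUnit x} :=
    Fintype.card_subtype_compl _
  have hle2 : Fintype.card {x : A // IsUnit x} ≤ Fintype.card A := Fintype.card_subtype_le _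
  rw [e1]
  simp only [Nat.card_eq_fintype_card] at e2 e3 cardA cardker ⊢
  omega

lemma myDegDvd (F : Type*) [Field F] [Fintype F] (p n₀ d : ℕ) (hp : p.Prime) [CharP F p]
    (hd : 0 < d) (hdvd : n₀ ∣ Fintype.card F ^ d - 1)
    (g : F[X]) (hi : Irreducible g) (hgd : g ∣ (X : F[X]) ^ n₀ - 1) :
    g.natDegree ∣ d := by
  classical
  haveI : Fact p.Prime := ⟨hp⟩
  set q := Fintype.card F with hq
  have hq2 : 2 ≤ q := Fintype.one_lt_card
  set r := g.natDegree with hr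
  have hrpos : 0 < r := hi.natDegree_pos
  haveI : Fact (Irreducible g) := ⟨hi⟩
  set K := AdjoinRoot g with hK
  have hfinmod : Module.Finite F K := (AdjoinRoot.powerBasis hi.ne_zero).finite
  have : Finite K := Module.finite_of_finite F
  have : Fintype K := Fintype.ofFinite _
  have cardK : Fintype.card K = q ^ r := by
    rw [Module.card_eq_pow_finrank (K := F), (AdjoinRoot.powerBasis hi.ne_zero).finrank]
    rfl
  haveI : CharP K p := charP_of_injective_algebraMap (algebraMap F K).injective p
  set α := AdjoinRoot.root g with hα
  have hαn : α ^ n₀ = 1 := by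
    obtain ⟨t, ht⟩ := hgd
    have h0 : (aeval α) ((X : F[X]) ^ n₀ - 1) = 0 := by
      rw [ht, map_mul, AdjoinRoot.aeval_eq, AdjoinRoot.mk_self, zero_mul]
    rw [map_sub, map_pow, aeval_X, map_one, sub_eq_zero] at h0
    exact h0
  obtain ⟨k, hpp, hcard⟩ := FiniteField.card F p
  have hqd1 : 1 ≤ q ^ d := Nat.one_le_pow _ _ (by omega)
  have hαfix : α ^ q ^ d = α := by
    obtain ⟨t, ht⟩ := hdvd
    have h1 : α ^ (q ^ d - 1) = 1 := by
      rw [ht, pow_mul, hαn, one_pow]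
    calc α ^ q ^ d = α ^ (q ^ d - 1 + 1) := by congr 1; omega
    _ = α ^ (q ^ d - 1) * α := by rw [pow_succ]
    _ = α := by rw [h1, one_mul]
  have hqd_eq : (q : ℕ) ^ d = p ^ ((k : ℕ) * d) := by rw [pow_mul, hq, hcard]
  let ψ : K →ₐ[F] K :=
    { toRingHom := iterateFrobenius K p ((k : ℕ) * d)
      commutes' := fun c => by
        show (iterateFrobenius K p ((k : ℕ) * d)) ((algebraMap F K) c) = (algebraMap F K) c
        rw [iterateFrobenius_def, ← map_pow, ← hqd_eq, FiniteField.pow_card_pow] }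
  have hψroot : ψ α = α := by
    show iterateFrobenius K p ((k : ℕ) * d) α = α
    rw [iterateFrobenius_def, ← hqd_eq, hαfix]
  have hψ : ψ = AlgHom.id F K := AdjoinRoot.algHom_ext hψroot
  have hfix : ∀ x : K, x ^ q ^ d = x := by
    intro x
    have := congrArg (fun f : K →ₐ[F] K => f x) hψ
    simpa [ψ, iterateFrobenius_def, ← hqd_eq] using this
  obtain ⟨ζ, hζ⟩ := IsCyclic.exists_generator (α := Kˣ)
  have hordζ : orderOf ζ = q ^ r - 1 := by
    rw [orderOf_eq_card_of_forall_mem_zpowers hζ, Nat.card_eq_fintype_card,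
      Fintype.card_units, cardK]
  have hζfix : ζ ^ (q ^ d - 1) = 1 := by
    have h1 : (ζ : K) ^ q ^ d = ζ := hfix ζ
    have h2 : ζ ^ q ^ d = ζ := Units.ext (by push_cast [Units.val_pow_eq_pow_val]; exact h1)
    have h3 : ζ ^ (q ^ d - 1) * ζ = ζ ^ q ^ d := by
      rw [← pow_succ]; congr 1; omega
    have h4 : ζ ^ (q ^ d - 1) * ζ = 1 * ζ := by rw [h3, h2, one_mul]
    exact mul_right_cancel h4
  have hdd : q ^ r - 1 ∣ q ^ d - 1 := by
    rw [← hordζ]; exact orderOf_dvd_of_pow_eq_one hζfix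
  exact my_dvd_aux hq2 hrpos d hdd

end Aux

/-- `Φ_q(x^n - 1) = q^{n - n₀} * ∏_{r ∣ d} (q^r - 1)^{v_r}`. -/
theorem stmt7 (F : Type*) [Field F] [Fintype F] (p s n₀ n q d : ℕ) (hp : p.Prime)
    [CharP F p] (hq : Fintype.card F = q) (hcop : Nat.Coprime n₀ p) (hn₀ : 0 < n₀)
    (hn : n = p ^ s * n₀)
    (hd : 0 < d ∧ n₀ ∣ q ^ d - 1 ∧ ∀ e, 0 < e → n₀ ∣ q ^ e - 1 → d ≤ e)
    (v : ℕ → ℕ)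
    (hv : ∀ r, v r = ({g : F[X] | g.Monic ∧ Irreducible g ∧ g.natDegree = r ∧
      g ∣ X ^ n - 1}).ncard) :
    Nat.card ((F[X] ⧸ Ideal.span {(X : F[X]) ^ n - 1})ˣ) =
      q ^ (n - n₀) * ∏ r ∈ d.divisors, (q ^ r - 1) ^ v r := by
  classical
  subst hq hn
  obtain ⟨hd0, hddvd, -⟩ := hd
  haveI : Fact p.Prime := ⟨hp⟩
  set q := Fintype.card F with hq
  have hq2 : 2 ≤ q := Fintype.one_lt_card
  set e := p ^ s with he0
  have he : 0 < e := pow_pos hp.pos s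
  set f₀ : F[X] := X ^ n₀ - 1 with hf₀
  have hf₀C : f₀ = X ^ n₀ - C 1 := by rw [hf₀, map_one]
  have hf₀m : f₀.Monic := by rw [hf₀C]; exact monic_X_pow_sub_C 1 hn₀.ne'
  have hf₀0 : f₀ ≠ 0 := hf₀m.ne_zero
  have hf₀deg : f₀.natDegree = n₀ := by rw [hf₀C, natDegree_X_pow_sub_C]
  have hn₀F : (n₀ : F) ≠ 0 := by
    rw [Ne, CharP.cast_eq_zero_iff F p]
    exact (hp.coprime_iff_not_dvd).mp hcop.symm
  have hsep : f₀.Separable := by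
    rw [hf₀C]; exact separable_X_pow_sub_C 1 hn₀F one_ne_zero
  have hsqf : Squarefree f₀ := hsep.squarefree
  have hXn : (X : F[X]) ^ (e * n₀) - 1 = f₀ ^ e := by
    rw [hf₀, sub_pow_char_pow (R := F[X]), one_pow, ← pow_mul, mul_comm n₀ e]
  -- the set of monic irreducible factors
  set S : Finset F[X] := (UniqueFactorizationMonoid.normalizedFactors f₀).toFinset with hS
  have hnodup : (UniqueFactorizationMonoid.normalizedFactors f₀).Nodup :=
    (UniqueFactorizationMonoid.squarefree_iff_nodup_normalizedFactors hf₀0).mp hsqf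
  have hSmem : ∀ g ∈ S, g.Monic ∧ Irreducible g ∧ g ∣ f₀ := by
    intro g hg
    rw [hS, Multiset.mem_toFinset] at hg
    have hirr := UniqueFactorizationMonoid.irreducible_of_normalized_factor g hg
    have hnorm := UniqueFactorizationMonoid.normalize_normalized_factor g hg
    have hmono : g.Monic := by
      have := Polynomial.monic_normalize (p := g) hirr.ne_zero
      rwa [hnorm] at this
    exact ⟨hmono, hirr, UniqueFactorizationMonoid.dvd_of_mem_normalizedFactors hg⟩
  have hmemS : ∀ g : F[X], g ∈ S ↔ g.Monic ∧ Irreducible g ∧ g ∣ f₀ := by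
    intro g
    constructor
    · exact hSmem g
    · rintro ⟨hmono, hirr, hdvd⟩
      obtain ⟨h, hhmem, hassoc⟩ :=
        UniqueFactorizationMonoid.exists_mem_normalizedFactors_of_dvd hf₀0 hirr hdvd
      have hh : h.Monic ∧ Irreducible h ∧ h ∣ f₀ := hSmem h (by rwa [hS, Multiset.mem_toFinset])
      have : g = h := Polynomial.eq_of_monic_of_associated hmono hh.1 hassoc
      rw [hS, Multiset.mem_toFinset, this]
      exact hhmem
  have hprod : ∏ g ∈ S, g = f₀ := by
    have hassoc : Associated (UniqueFactorizationMonoid.normalizedFactors f₀).prod f₀ :=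
      UniqueFactorizationMonoid.prod_normalizedFactors hf₀0
    have heq : ∏ g ∈ S, g = (UniqueFactorizationMonoid.normalizedFactors f₀).prod := by
      rw [hS, Finset.prod_eq_multiset_prod, Multiset.toFinset_val,
        Multiset.dedup_eq_self.mpr hnodup]
      simp
    have hmonicprod : (∏ g ∈ S, g).Monic :=
      Polynomial.monic_prod_of_monic S id fun g hg => (hSmem g hg).1
    exact Polynomial.eq_of_monic_of_associated hmonicprod hf₀m (heq ▸ hassoc)
  have hsum : ∑ g ∈ S, g.natDegree = n₀ := by
    rw [← hf₀deg, ← hprod]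
    rw [Polynomial.natDegree_prod _ _ fun g hg => (hSmem g hg).2.1.ne_zero]
  -- CRT decomposition
  set Ig : {x // x ∈ S} → Ideal F[X] := fun g => Ideal.span {g.1 ^ e} with hIg
  have hpair : ∀ (i j : {x // x ∈ S}), i ≠ j → IsCoprime (i.1 ^ e) (j.1 ^ e) := by
    intro i j hij
    have hne : i.1 ≠ j.1 := fun hvals => hij (Subtype.ext hvals)
    have hi' := hSmem i.1 i.2
    have hj' := hSmem j.1 j.2
    have hnd : ¬ i.1 ∣ j.1 := by
      intro hdvd
      exact hne (Polynomial.eq_of_monic_of_associated hi'.1 hj'.1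
        (hi'.2.1.associated_of_dvd hj'.2.1 hdvd))
    exact ((hi'.2.1.coprime_iff_not_dvd.mpr hnd).pow : IsCoprime _ _)
  have hcp : Pairwise (Function.onFun IsCoprime Ig) := by
    intro i j hij
    rw [hIg]
    exact (Ideal.isCoprime_span_singleton_iff _ _).mpr (hpair i j hij)
  have hiInf : (⨅ i, Ig i) = Ideal.span {(X : F[X]) ^ (e * n₀) - 1} := by
    rw [hIg, Ideal.iInf_span_singleton (fun i j hij => hpair i j hij)]
    congr 1
    rw [hXn]
    congr 1
    rw [Finset.prod_coe_sort S (fun g => g ^ e), Finset.prod_pow, hprod]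
  let Φ : (F[X] ⧸ Ideal.span {(X : F[X]) ^ (e * n₀) - 1}) ≃+*
      ∀ i : {x // x ∈ S}, F[X] ⧸ Ig i :=
    (Ideal.quotEquivOfEq hiInf.symm).trans (Ideal.quotientInfRingEquivPiQuotient Ig hcp)
  have hcard1 : Nat.card ((F[X] ⧸ Ideal.span {(X : F[X]) ^ (e * n₀) - 1})ˣ) =
      ∏ i : {x // x ∈ S}, Nat.card ((F[X] ⧸ Ig i)ˣ) := by
    rw [Nat.card_congr (Units.mapEquiv Φ.toMulEquiv).toEquiv,
      Nat.card_congr (myPiUnits).toEquiv, Nat.card_pi]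
  -- compute each factor
  have hfac : ∀ i : {x // x ∈ S}, Nat.card ((F[X] ⧸ Ig i)ˣ) =
      q ^ (i.1.natDegree * (e - 1)) * (q ^ i.1.natDegree - 1) := by
    intro i
    have hi' := hSmem i.1 i.2
    rw [hIg]
    rw [myCardUnitsQuot F i.1 hi'.2.1 e he, ← hq]
    have h2 : q ^ (i.1.natDegree * (e - 1)) * q ^ i.1.natDegree = q ^ (i.1.natDegree * e) := by
      rw [← pow_add]
      congr 1
      rw [← Nat.mul_succ]
      congr 1
      omega
    calc q ^ (i.1.natDegree * e) - q ^ (i.1.natDegree * (e - 1))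
        = q ^ (i.1.natDegree * (e - 1)) * q ^ i.1.natDegree -
            q ^ (i.1.natDegree * (e - 1)) * 1 := by rw [h2, mul_one]
      _ = q ^ (i.1.natDegree * (e - 1)) * (q ^ i.1.natDegree - 1) := by rw [← Nat.mul_sub]
  rw [hcard1, Finset.prod_congr rfl fun i _ => hfac i, Finset.prod_mul_distrib,
    Finset.prod_pow_eq_pow_sum]
  -- exponent bookkeeping
  have hsum2 : ∑ i : {x // x ∈ S}, i.1.natDegree * (e - 1) = n₀ * (e - 1) := by
    rw [Finset.sum_coe_sort S (fun g => g.natDegree * (e - 1)), ← Finset.sum_mul, hsum]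
  have hexp : e * n₀ - n₀ = n₀ * (e - 1) := by
    rw [Nat.mul_sub, mul_one, mul_comm]
  rw [hsum2, hexp]
  congr 1
  -- now the product over factors grouped by degree
  have hmaps : ∀ g ∈ S, g.natDegree ∈ d.divisors := by
    intro g hg
    have hg' := hSmem g hg
    refine Nat.mem_divisors.mpr ⟨?_, hd0.ne'⟩
    exact myDegDvd F p n₀ d hp hd0 hddvd g hg'.2.1 (hf₀ ▸ hg'.2.2)
  rw [Finset.prod_coe_sort S (fun g => q ^ g.natDegree - 1),
    ← Finset.prod_fiberwise_of_maps_to hmaps (fun g => q ^ g.natDegree - 1)]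
  refine Finset.prod_congr rfl fun r _ => ?_
  have hvr : v r = (S.filter fun g => g.natDegree = r).card := by
    rw [hv r]
    have hseteq : {g : F[X] | g.Monic ∧ Irreducible g ∧ g.natDegree = r ∧
        g ∣ (X : F[X]) ^ (e * n₀) - 1} = ↑(S.filter fun g => g.natDegree = r) := by
      ext g
      simp only [Set.mem_setOf_eq, Finset.coe_filter, Finset.mem_coe, Set.mem_setOf_eq]
      constructor
      · rintro ⟨hmono, hirr, hdeg, hdvd⟩
        have hprime : Prime g := UniqueFactorizationMonoid.irreducible_iff_prime.mp hirr
        have hdvd0 : g ∣ f₀ := by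
          refine hprime.dvd_of_dvd_pow (n := e) ?_
          rwa [← hXn]
        exact ⟨(hmemS g).mpr ⟨hmono, hirr, hdvd0⟩, hdeg⟩
      · rintro ⟨hgS, hdeg⟩
        have hg' := hSmem g hgS
        refine ⟨hg'.1, hg'.2.1, hdeg, ?_⟩
        rw [hXn]
        exact hg'.2.2.trans (dvd_pow_self f₀ he.ne')
    rw [hseteq, Set.ncard_coe_finset]
  have hconst : ∏ g ∈ S.filter (fun g => g.natDegree = r), (q ^ g.natDegree - 1)
      = ∏ _g ∈ S.filter (fun g => g.natDegree = r), (q ^ r - 1) :=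
    Finset.prod_congr rfl fun g hg => by rw [(Finset.mem_filter.mp hg).2]
  rw [hvr, hconst, Finset.prod_const]
end

section
/- Let N_k be the number of k-normal elements of F_{q^n} over F_q and N_0 the number of normal elements. If N_k > 0, then N_k ≥ N_0 / q^k. -/
open Polynomial

namespace Stmt12Aux

open Finset

variable {E : Type*} [Field E]

noncomputable def G (q n : ℕ) (β : E) : E[X] :=
  ∑ i ∈ Finset.range n, C (β ^ q ^ i) * X ^ (n - 1 - i)

lemma shift (q n : ℕ) (hn : 0 < n) (β : E) (hβ : β ^ q ^ n = β) :
    X * G q n β = G q n (β ^ q) + C β * ((X : E[X]) ^ n - 1) := by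
  obtain ⟨m, rfl⟩ : ∃ m, n = m + 1 := ⟨n - 1, (Nat.succ_pred_eq_of_pos hn).symm⟩
  have hpow : ∀ i : ℕ, (β ^ q) ^ q ^ i = β ^ q ^ (i + 1) := fun i => by
    rw [← pow_mul, ← pow_succ']
  rw [G, G, Finset.mul_sum]
  rw [Finset.sum_range_succ' (fun i => X * (C (β ^ q ^ i) * X ^ (m + 1 - 1 - i)))]
  rw [Finset.sum_range_succ (fun i => C ((β ^ q) ^ q ^ i) * X ^ (m + 1 - 1 - i))]
  have e1 : ∀ i ∈ Finset.range m,
      X * (C (β ^ q ^ (i + 1)) * X ^ (m + 1 - 1 - (i + 1)))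
        = C ((β ^ q) ^ q ^ i) * X ^ (m + 1 - 1 - i) := by
    intro i hi
    rw [hpow i]
    rw [Finset.mem_range] at hi
    have : m + 1 - 1 - i = (m + 1 - 1 - (i + 1)) + 1 := by omega
    rw [this, pow_succ]
    ring
  rw [Finset.sum_congr rfl e1]
  have e2 : C ((β ^ q) ^ q ^ m) * X ^ (m + 1 - 1 - m) = C β := by
    rw [hpow m, hβ]
    simp
  rw [e2]
  simp
  ring

lemma shift_iter (q n : ℕ) (hn : 0 < n) (hall : ∀ γ : E, γ ^ q ^ n = γ) (β : E) (j : ℕ) :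
    ((X : E[X]) ^ n - 1) ∣ (G q n (β ^ q ^ j) - X ^ j * G q n β) := by
  induction j with
  | zero => simp
  | succ j ih =>
      have hb : β ^ q ^ (j + 1) = (β ^ q ^ j) ^ q := by rw [← pow_mul, pow_succ]
      have h2 := shift q n hn (β ^ q ^ j) (hall _)
      have key : G q n (β ^ q ^ (j + 1)) - X ^ (j + 1) * G q n β
          = X * (G q n (β ^ q ^ j) - X ^ j * G q n β)
            - C (β ^ q ^ j) * ((X : E[X]) ^ n - 1) := by
        rw [hb]; linear_combination -h2
      rw [key]
      exact dvd_sub (Dvd.dvd.mul_left ih X) (Dvd.dvd.mul_left dvd_rfl _)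

lemma map_G (q n : ℕ) (σ : E →+* E) (hσ : ∀ x, σ x = x ^ q) (β : E) :
    (G q n β).map σ = G q n (β ^ q) := by
  unfold G
  rw [Polynomial.map_sum]
  refine Finset.sum_congr rfl fun i _ => ?_
  rw [Polynomial.map_mul, Polynomial.map_C, Polynomial.map_pow, Polynomial.map_X, hσ,
    ← pow_mul, mul_comm (q ^ i) q, pow_mul]

lemma fix_pow {q : ℕ} {c : E} (hc : c ^ q = c) : ∀ j : ℕ, c ^ q ^ j = c := by
  intro j
  induction j with
  | zero => simp
  | succ j ih => rw [pow_succ, pow_mul, ih, hc]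

lemma G_linearize (q n k' : ℕ) (h : E[X])
    (hfix : ∀ i, (h.coeff i) ^ q = h.coeff i)
    (hτ : ∀ j : ℕ, ∃ τ : E →+* E, ∀ x, τ x = x ^ q ^ j)
    (β : E) :
    G q n (∑ i ∈ Finset.range k', h.coeff i * β ^ q ^ i)
      = ∑ i ∈ Finset.range k', C (h.coeff i) * G q n (β ^ q ^ i) := by
  have key : ∀ j : ℕ, ((∑ i ∈ Finset.range k', h.coeff i * β ^ q ^ i) ^ q ^ j)
      = ∑ i ∈ Finset.range k', h.coeff i * (β ^ q ^ i) ^ q ^ j := by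
    intro j
    obtain ⟨τ, hτj⟩ := hτ j
    rw [← hτj, map_sum]
    refine Finset.sum_congr rfl fun i _ => ?_
    rw [map_mul, hτj, hτj, fix_pow (hfix i) j]
  unfold G
  simp_rw [key, map_sum, Finset.sum_mul, map_mul, Finset.mul_sum]
  rw [Finset.sum_comm]
  exact Finset.sum_congr rfl fun i _ => Finset.sum_congr rfl fun j _ => by ring

variable [Fintype E] [DecidableEq E] [DecidableEq E[X]]

lemma fixed_coeffs (q n : ℕ) (hn : 0 < n) (σ : E →+* E) (hσ : ∀ x, σ x = x ^ q)
    (hall : ∀ γ : E, γ ^ q ^ n = γ) (α : E) :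
    ∃ h : E[X], h.Monic ∧
      Associated (EuclideanDomain.gcd ((X : E[X]) ^ n - 1) (G q n α)) h ∧
      ∀ i, (h.coeff i) ^ q = h.coeff i := by
  set m : E[X] := X ^ n - 1 with hm
  have hm0 : m ≠ 0 := by
    intro h0
    have : m.coeff 0 = -1 := by
      simp [hm, Polynomial.coeff_X_pow, hn.ne]
    rw [h0] at this
    simp at this
  set d : E[X] := EuclideanDomain.gcd m (G q n α) with hd
  have hd0 : d ≠ 0 := by
    intro h0
    exact hm0 (EuclideanDomain.gcd_eq_zero_iff.mp h0).1
  have hbij : Function.Bijective σ :=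
    (Finite.injective_iff_bijective).mp σ.injective
  set e : E ≃+* E := RingEquiv.ofBijective σ hbij with he
  set φ : E[X] ≃+* E[X] := Polynomial.mapEquiv e with hφ
  have hφ_apply : ∀ p : E[X], φ p = p.map σ := fun p => rfl
  have hφm : φ m = m := by
    rw [hφ_apply, hm, Polynomial.map_sub, Polynomial.map_pow, Polynomial.map_X,
      Polynomial.map_one]
  have hφG : ∀ β : E, φ (G q n β) = G q n (β ^ q) := fun β => by
    rw [hφ_apply, map_G q n σ hσ]
  set d₂ : E[X] := EuclideanDomain.gcd m (G q n (α ^ q)) with hd₂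
  have hrel : m ∣ G q n (α ^ q) - X * G q n α := by
    have := shift_iter q n hn hall α 1
    simpa using this
  have hXm : ¬ (X : E[X]) ∣ m := by
    rw [Polynomial.X_dvd_iff]
    simp [hm, Polynomial.coeff_X_pow, hn.ne]
  have hA2 : Associated d₂ d := by
    have hd₂m : d₂ ∣ m := EuclideanDomain.gcd_dvd_left _ _
    have hd₂X : d₂ ∣ X * G q n α := by
      have h1 : d₂ ∣ G q n (α ^ q) := EuclideanDomain.gcd_dvd_right _ _
      have h2 : d₂ ∣ G q n (α ^ q) - X * G q n α := dvd_trans hd₂m hrel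
      have := dvd_sub h1 h2
      simpa using this
    have hXd₂ : ¬ (X : E[X]) ∣ d₂ := fun hh => hXm (hh.trans hd₂m)
    have hcop : IsCoprime (d₂ : E[X]) X :=
      ((Polynomial.prime_X.coprime_iff_not_dvd).mpr hXd₂).symm
    have hd₂G : d₂ ∣ G q n α := hcop.dvd_of_dvd_mul_left hd₂X
    have hdir1 : d₂ ∣ d := EuclideanDomain.dvd_gcd hd₂m hd₂G
    have hdir2 : d ∣ d₂ := by
      refine EuclideanDomain.dvd_gcd (EuclideanDomain.gcd_dvd_left _ _) ?_
      have h1 : d ∣ X * G q n α := (EuclideanDomain.gcd_dvd_right _ _).mul_left X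
      have h2 : d ∣ G q n (α ^ q) - X * G q n α :=
        dvd_trans (EuclideanDomain.gcd_dvd_left _ _) hrel
      have := dvd_add h2 h1
      simpa using this
    exact associated_of_dvd_dvd hdir1 hdir2
  have hA1 : Associated (φ d) d₂ := by
    have h1 : φ d ∣ m := by
      have := _root_.map_dvd φ (EuclideanDomain.gcd_dvd_left m (G q n α))
      rwa [hφm] at this
    have h2 : φ d ∣ G q n (α ^ q) := by
      have := _root_.map_dvd φ (EuclideanDomain.gcd_dvd_right m (G q n α))
      rwa [hφG α] at this
    refine associated_of_dvd_dvd (EuclideanDomain.dvd_gcd h1 h2) ?_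
    have hsm : φ.symm m = m := φ.injective (by rw [φ.apply_symm_apply, hφm])
    have hsG : φ.symm (G q n (α ^ q)) = G q n α :=
      φ.injective (by rw [φ.apply_symm_apply, hφG α])
    have h3 : φ.symm d₂ ∣ d := by
      refine EuclideanDomain.dvd_gcd ?_ ?_
      · have := _root_.map_dvd φ.symm (EuclideanDomain.gcd_dvd_left m (G q n (α ^ q)))
        rwa [hsm] at this
      · have := _root_.map_dvd φ.symm (EuclideanDomain.gcd_dvd_right m (G q n (α ^ q)))
        rwa [hsG] at this
    have := _root_.map_dvd φ h3
    rwa [φ.apply_symm_apply d₂] at this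
  refine ⟨normalize d, Polynomial.monic_normalize hd0, (associated_normalize d), ?_⟩
  have hmon : (normalize d).Monic := Polynomial.monic_normalize hd0
  have hφh : φ (normalize d) = normalize d := by
    have hassoc : Associated (φ (normalize d)) (normalize d) := by
      have h1 : Associated (φ (normalize d)) (φ d) :=
        ((normalize_associated d).map (φ : E[X] →+* E[X]).toMonoidHom)
      exact h1.trans (hA1.trans (hA2.trans (associated_normalize d)))
    have hmap_monic : (φ (normalize d)).Monic := by
      rw [hφ_apply]
      exact hmon.map σ
    exact Polynomial.eq_of_monic_of_associated hmap_monic hmon hassoc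
  intro i
  have := congrArg (fun p : E[X] => p.coeff i) hφh
  simp only [hφ_apply, Polynomial.coeff_map, hσ] at this
  exact this

lemma assoc_natDegree {a b : E[X]} (hab : Associated a b) (ha : a ≠ 0) :
    a.natDegree = b.natDegree := by
  obtain ⟨u, rfl⟩ := hab
  have hu0 : (u : E[X]) ≠ 0 := Units.ne_zero u
  have hdeg : (u : E[X]).natDegree = 0 := by
    have h1 : (u : E[X]).degree = 0 := Polynomial.isUnit_iff_degree_eq_zero.mp u.isUnit
    exact Polynomial.natDegree_eq_zero_iff_degree_le_zero.mpr h1.le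
  rw [Polynomial.natDegree_mul ha hu0, hdeg]
  omega

lemma euclid_assoc_gcd (a b : E[X]) :
    Associated (EuclideanDomain.gcd a b) (gcd a b) := by
  refine associated_of_dvd_dvd ?_ ?_
  · exact dvd_gcd (EuclideanDomain.gcd_dvd_left a b) (EuclideanDomain.gcd_dvd_right a b)
  · exact EuclideanDomain.dvd_gcd (gcd_dvd_left a b) (gcd_dvd_right a b)

end Stmt12Aux

open Stmt12Aux

/-- If `k`-normal elements of `F_{q^n}` over `F_q` exist, then `N_k ≥ N_0 / q^k`. -/
theorem stmt12 (F E : Type*) [Field F] [Field E] [Algebra F E] [Fintype F] [Fintype E] [DecidableEq E[X]]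
    (q n k : ℕ) (hq : Fintype.card F = q) (hfin : Module.finrank F E = n)
    (hn : 0 < n) (hk : k ≤ n)
    (hpos : 0 < ({α : E | (EuclideanDomain.gcd ((X : E[X]) ^ n - 1)
        (∑ i ∈ Finset.range n, C (α ^ q ^ i) * X ^ (n - 1 - i))).natDegree = k}).ncard) :
    (({α : E | (EuclideanDomain.gcd ((X : E[X]) ^ n - 1)
        (∑ i ∈ Finset.range n, C (α ^ q ^ i) * X ^ (n - 1 - i))).natDegree = 0}).ncard : ℚ)
      / q ^ k ≤
    (({α : E | (EuclideanDomain.gcd ((X : E[X]) ^ n - 1)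
        (∑ i ∈ Finset.range n, C (α ^ q ^ i) * X ^ (n - 1 - i))).natDegree = k}).ncard : ℚ) := by
  classical
  have hGset : ∀ j : ℕ,
      {α : E | (EuclideanDomain.gcd ((X : E[X]) ^ n - 1)
        (∑ i ∈ Finset.range n, C (α ^ q ^ i) * X ^ (n - 1 - i))).natDegree = j}
      = {α : E | (EuclideanDomain.gcd ((X : E[X]) ^ n - 1) (G q n α)).natDegree = j} :=
    fun j => rfl
  rw [hGset 0, hGset k]
  rw [hGset k] at hpos
  set m : E[X] := (X : E[X]) ^ n - 1 with hm
  set S0 : Set E := {α : E | (EuclideanDomain.gcd m (G q n α)).natDegree = 0} with hS0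
  set Sk : Set E := {α : E | (EuclideanDomain.gcd m (G q n α)).natDegree = k} with hSk
  -- basic character / cardinality facts
  have hq2 : 1 < q := hq ▸ Fintype.one_lt_card
  have hq0 : 0 < q := by omega
  set p : ℕ := ringChar F with hpdef
  haveI : CharP F p := ringChar.charP F
  obtain ⟨f, hp, hcardF⟩ := FiniteField.card F p
  have hqpf : q = p ^ (f : ℕ) := by rw [← hq, hcardF]
  haveI : CharP E p := charP_of_injective_algebraMap (algebraMap F E).injective p
  haveI := Fact.mk hp
  have hcardE : Fintype.card E = q ^ n := by
    rw [← hq, ← hfin]; exact Module.card_eq_pow_finrank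
  have hall : ∀ γ : E, γ ^ q ^ n = γ := by
    intro γ
    rw [← hcardE]
    exact FiniteField.pow_card γ
  have hτ : ∀ j : ℕ, ∃ τ : E →+* E, ∀ x, τ x = x ^ q ^ j := by
    intro j
    refine ⟨iterateFrobenius E p (f * j), fun x => ?_⟩
    rw [iterateFrobenius_def, hqpf, ← pow_mul]
  obtain ⟨σ, hσ⟩ := hτ 1
  have hσ' : ∀ x : E, σ x = x ^ q := fun x => by rw [hσ, pow_one]
  have hm0 : m ≠ 0 := by
    intro h0
    have : m.coeff 0 = -1 := by simp [hm, Polynomial.coeff_X_pow, hn.ne]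
    rw [h0] at this
    simp at this
  -- pick a k-normal element α
  have hSkfin : Sk.Finite := Set.toFinite Sk
  obtain ⟨α, hα⟩ := (Set.ncard_pos hSkfin).mp hpos
  obtain ⟨h, hmonic, hassoc, hfix⟩ := fixed_coeffs q n hn σ hσ' hall α
  have hd0 : EuclideanDomain.gcd m (G q n α) ≠ 0 := by
    intro h0
    exact hm0 (EuclideanDomain.gcd_eq_zero_iff.mp h0).1
  have hhk : h.natDegree = k := by
    rw [← assoc_natDegree hassoc hd0]
    exact hα
  have hh0 : h ≠ 0 := hmonic.ne_zero
  have hhm : h ∣ m := dvd_trans hassoc.symm.dvd (EuclideanDomain.gcd_dvd_left _ _)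
  -- the map T
  set T : E → E := fun β => ∑ i ∈ Finset.range (k + 1), h.coeff i * β ^ q ^ i with hT
  have hlt : h.natDegree < k + 1 := by omega
  -- T maps normal elements to k-normal elements
  have hdvd_key : ∀ β : E, m ∣ G q n (T β) - h * G q n β := by
    intro β
    have hsum : h * G q n β
        = ∑ i ∈ Finset.range (k + 1), C (h.coeff i) * (X ^ i * G q n β) := by
      conv_lhs => rw [Polynomial.as_sum_range' h (k + 1) hlt]
      rw [Finset.sum_mul]
      exact Finset.sum_congr rfl fun i _ => by
        rw [← Polynomial.C_mul_X_pow_eq_monomial, mul_assoc]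
    rw [hT]
    rw [G_linearize q n (k + 1) h hfix hτ β, hsum, ← Finset.sum_sub_distrib]
    refine Finset.dvd_sum fun i _ => ?_
    rw [← mul_sub]
    exact Dvd.dvd.mul_left (shift_iter q n hn hall β i) _
  have hmaps : ∀ β ∈ S0, T β ∈ Sk := by
    intro β hβ
    have hβ0 : (EuclideanDomain.gcd m (G q n β)).natDegree = 0 := hβ
    set D : E[X] := EuclideanDomain.gcd m (G q n (T β)) with hD
    have hD0 : D ≠ 0 := by
      intro h0
      exact hm0 (EuclideanDomain.gcd_eq_zero_iff.mp h0).1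
    have hDm : D ∣ m := EuclideanDomain.gcd_dvd_left _ _
    have hDG : D ∣ G q n (T β) := EuclideanDomain.gcd_dvd_right _ _
    -- lower bound : h ∣ D
    have hlow : h ∣ D := by
      refine EuclideanDomain.dvd_gcd hhm ?_
      have h1 : h ∣ G q n (T β) - h * G q n β := hhm.trans (hdvd_key β)
      have := dvd_add h1 (dvd_mul_right h (G q n β))
      simpa using this
    have hlow' : k ≤ D.natDegree := by
      rw [← hhk]
      exact Polynomial.natDegree_le_of_dvd hlow hD0
    -- upper bound
    have hDhG : D ∣ h * G q n β := by
      have h1 : D ∣ G q n (T β) - h * G q n β := hDm.trans (hdvd_key β)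
      have := dvd_sub hDG h1
      simpa using this
    have hup : D ∣ gcd m h * gcd m (G q n β) := by
      refine dvd_trans ?_ (gcd_mul_dvd_mul_gcd m h (G q n β))
      exact dvd_gcd hDm hDhG
    have hmh0 : gcd m h ≠ 0 := by
      intro h0
      exact hm0 ((gcd_eq_zero_iff _ _).mp h0).1
    have hmG0 : gcd m (G q n β) ≠ 0 := by
      intro h0
      exact hm0 ((gcd_eq_zero_iff _ _).mp h0).1
    have hprod0 : gcd m h * gcd m (G q n β) ≠ 0 := mul_ne_zero hmh0 hmG0
    have hupdeg : D.natDegree ≤ (gcd m h * gcd m (G q n β)).natDegree :=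
      Polynomial.natDegree_le_of_dvd hup hprod0
    have hdeg1 : (gcd m h).natDegree ≤ k := by
      rw [← hhk]
      exact Polynomial.natDegree_le_of_dvd (gcd_dvd_right m h) hh0
    have hdeg2 : (gcd m (G q n β)).natDegree = 0 := by
      rw [← assoc_natDegree (euclid_assoc_gcd m (G q n β)) ?nz]
      · exact hβ0
      case nz =>
        intro h0
        exact hm0 (EuclideanDomain.gcd_eq_zero_iff.mp h0).1
    have hup' : D.natDegree ≤ k := by
      rw [Polynomial.natDegree_mul hmh0 hmG0, hdeg2, Nat.add_zero] at hupdeg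
      omega
    show D.natDegree = k
    omega
  -- the linearized polynomial L and root bound
  set L : E[X] := ∑ i ∈ Finset.range (k + 1), C (h.coeff i) * X ^ (q ^ i) with hL
  have hLcoeff : L.coeff (q ^ k) = 1 := by
    rw [hL, Polynomial.finset_sum_coeff]
    rw [Finset.sum_eq_single k]
    · rw [Polynomial.coeff_C_mul, Polynomial.coeff_X_pow, if_pos rfl, mul_one, ← hhk]
      exact hmonic.coeff_natDegree
    · intro i hi hik
      have hik' : i < k := by
        rw [Finset.mem_range] at hi
        omega
      rw [Polynomial.coeff_C_mul, Polynomial.coeff_X_pow,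
        if_neg (Nat.ne_of_gt (Nat.pow_lt_pow_right hq2 hik')), mul_zero]
    · intro hk'
      exact absurd (Finset.self_mem_range_succ k) hk'
  have hLne : L ≠ 0 := by
    intro h0
    rw [h0] at hLcoeff
    simp at hLcoeff
  have hLdeg : L.natDegree ≤ q ^ k := by
    rw [hL]
    refine Polynomial.natDegree_sum_le_of_forall_le _ _ fun i hi => ?_
    refine le_trans (Polynomial.natDegree_C_mul_le _ _) ?_
    refine le_trans (Polynomial.natDegree_X_pow_le _) ?_
    exact Nat.pow_le_pow_right (by omega) (by rw [Finset.mem_range] at hi; omega)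
  have hLeval : ∀ x : E, L.eval x = T x := by
    intro x
    rw [hL, hT, Polynomial.eval_finset_sum]
    exact Finset.sum_congr rfl fun i _ => by
      rw [Polynomial.eval_mul, Polynomial.eval_C, Polynomial.eval_pow, Polynomial.eval_X]
  have hTsub : ∀ x y : E, T x - T y = T (x - y) := by
    intro x y
    rw [hT]
    simp only
    rw [← Finset.sum_sub_distrib]
    refine Finset.sum_congr rfl fun i _ => ?_
    obtain ⟨τ, hτi⟩ := hτ i
    rw [← hτi x, ← hτi y, ← mul_sub, ← map_sub, hτi]
  -- counting
  have hS0fin : S0.Finite := Set.toFinite S0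
  have hcount : S0.ncard ≤ q ^ k * Sk.ncard := by
    rw [Set.ncard_eq_toFinset_card S0 hS0fin, Set.ncard_eq_toFinset_card Sk hSkfin]
    set S0f := hS0fin.toFinset with hS0f
    set Skf := hSkfin.toFinset with hSkf
    have himg : S0f.image T ⊆ Skf := by
      intro a ha
      rw [Finset.mem_image] at ha
      obtain ⟨x, hx, rfl⟩ := ha
      rw [hSkf, Set.Finite.mem_toFinset]
      exact hmaps x ((Set.Finite.mem_toFinset hS0fin).mp hx)
    have hfiber : ∀ a ∈ S0f.image T,
        (S0f.filter (fun x => T x = a)).card ≤ q ^ k := by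
      intro a ha
      rw [Finset.mem_image] at ha
      obtain ⟨x₀, _, hx₀⟩ := ha
      have hinj : Set.InjOn (fun x => x - x₀) (S0f.filter (fun x => T x = a)) := by
        intro u _ v _ huv
        have : u - x₀ = v - x₀ := by simpa using huv
        exact sub_left_inj.mp this
      have hmapsto : ∀ x ∈ S0f.filter (fun x => T x = a),
          x - x₀ ∈ L.roots.toFinset := by
        intro x hx
        rw [Finset.mem_filter] at hx
        have : T (x - x₀) = 0 := by
          rw [← hTsub, hx.2, hx₀, sub_self]
        rw [Multiset.mem_toFinset, Polynomial.mem_roots hLne]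
        rw [Polynomial.IsRoot, hLeval]
        exact this
      have h1 : (S0f.filter (fun x => T x = a)).card ≤ L.roots.toFinset.card :=
        Finset.card_le_card_of_injOn _ hmapsto hinj
      refine le_trans h1 (le_trans (Multiset.toFinset_card_le _) ?_)
      exact le_trans (Polynomial.card_roots' L) hLdeg
    calc S0f.card ≤ q ^ k * (S0f.image T).card :=
          Finset.card_le_mul_card_image S0f (q ^ k) hfiber
      _ ≤ q ^ k * Skf.card := by
          exact Nat.mul_le_mul_left _ (Finset.card_le_card himg)
  -- final rational arithmetic
  have hqk0 : (0 : ℚ) < (q : ℚ) ^ k := by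
    positivity
  rw [div_le_iff₀ hqk0]
  have : (S0.ncard : ℚ) ≤ (q : ℚ) ^ k * (Sk.ncard : ℚ) := by
    exact_mod_cast hcount
  linarith
end

section
/- Let n be coprime to q. Then N_1 = (v_1 / (q - 1)) * N_0, where N_0 and N_1 are the numbers of normal and 1-normal elements of F_{q^n} over F_q respectively, and v_1 = gcd(q - 1, n). -/
open Polynomial Finset

set_option linter.unusedSectionVars false

namespace Stmt15

variable {E : Type*} [Field E] [Fintype E] [DecidableEq E[X]]

noncomputable def G (q n : ℕ) (α : E) : E[X] :=
  ∑ i ∈ Finset.range n, C (α ^ q ^ i) * X ^ (n - 1 - i)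

noncomputable def M (n : ℕ) (a : E) : E[X] :=
  ∑ i ∈ Finset.range n, C a ^ i * X ^ (n - 1 - i)

noncomputable def D (q n : ℕ) (α : E) : E[X] :=
  EuclideanDomain.gcd ((X : E[X]) ^ n - 1) (G q n α)

section Basic

variable {q n : ℕ}

lemma a_ne_zero {a : E} (hn : 0 < n) (ha : a ^ n = 1) : a ≠ 0 := by
  rintro rfl
  rw [zero_pow hn.ne'] at ha
  exact zero_ne_one ha

lemma frob_pow_iter (hfrob : ∀ x y : E, (x + y) ^ q = x ^ q + y ^ q) :
    ∀ (i : ℕ) (x y : E), (x + y) ^ q ^ i = x ^ q ^ i + y ^ q ^ i := by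
  intro i
  induction i with
  | zero => simp
  | succ i ih =>
    intro x y
    rw [pow_succ, pow_mul, pow_mul, pow_mul, ih, hfrob]

lemma pow_q_sum (hq0 : q ≠ 0) (hfrob : ∀ x y : E, (x + y) ^ q = x ^ q + y ^ q)
    {ι : Type*} (s : Finset ι) (f : ι → E) :
    (∑ i ∈ s, f i) ^ q = ∑ i ∈ s, f i ^ q := by
  classical
  induction s using Finset.induction_on with
  | empty => simp [zero_pow hq0]
  | insert _ _ hni ih =>
    rw [Finset.sum_insert hni, Finset.sum_insert hni, hfrob, ih]

lemma G_add (hfrob : ∀ x y : E, (x + y) ^ q = x ^ q + y ^ q) (α β : E) :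
    G q n (α + β) = G q n α + G q n β := by
  rw [G, G, G, ← Finset.sum_add_distrib]
  refine Finset.sum_congr rfl fun i _ => ?_
  rw [frob_pow_iter hfrob, map_add, add_mul]

lemma eval_G (α a : E) : (G q n α).eval a = ∑ i ∈ Finset.range n, α ^ q ^ i * a ^ (n - 1 - i) := by
  rw [G, eval_finset_sum]
  refine Finset.sum_congr rfl fun i _ => ?_
  rw [eval_mul, eval_C, eval_pow, eval_X]

lemma eval_G_pow_q (hq0 : q ≠ 0)
    (hfrob : ∀ x y : E, (x + y) ^ q = x ^ q + y ^ q)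
    {α a : E} (hα : α ^ q ^ n = α) (ha : a ^ n = 1) :
    ((G q n α).eval a) ^ q = a ^ q * (G q n α).eval (a ^ q) := by
  have key : ∀ i ∈ Finset.range n, (α ^ q ^ i * a ^ (n - 1 - i)) ^ q
      = (fun j => α ^ q ^ j * (a ^ q) ^ (n - j)) (i + 1) := by
    intro i hi
    have e1 : (α ^ q ^ i) ^ q = α ^ q ^ (i + 1) := by rw [← pow_mul, ← pow_succ]
    have e2 : (a ^ (n - 1 - i)) ^ q = (a ^ q) ^ (n - (i + 1)) := by
      have h3 : n - 1 - i = n - (i + 1) := by omega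
      rw [← pow_mul, ← pow_mul, mul_comm q, h3]
    rw [mul_pow, e1, e2]
  rw [eval_G, eval_G, pow_q_sum hq0 hfrob, Finset.mul_sum, Finset.sum_congr rfl key]
  set f : ℕ → E := fun j => α ^ q ^ j * (a ^ q) ^ (n - j) with hf
  have hrhs : ∀ i ∈ Finset.range n, a ^ q * (α ^ q ^ i * (a ^ q) ^ (n - 1 - i)) = f i := by
    intro i hi
    rw [hf]
    simp only []
    rw [mul_comm (a ^ q), mul_assoc, ← pow_succ]
    congr 2
    simp only [Finset.mem_range] at hi
    omega
  rw [Finset.sum_congr rfl hrhs]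
  have hfn : f n = f 0 := by
    have haq : (a ^ q) ^ n = 1 := by rw [← pow_mul, mul_comm, pow_mul, ha, one_pow]
    rw [hf]
    simp only [Nat.sub_self, pow_zero, mul_one, pow_one, Nat.sub_zero, hα, haq]
  have h1 := Finset.sum_range_succ f n
  have h2 := Finset.sum_range_succ' f n
  have : (∑ i ∈ Finset.range n, f i) + f n = (∑ i ∈ Finset.range n, f (i + 1)) + f 0 :=
    h1.symm.trans h2
  rw [hfn] at this
  exact (add_right_cancel this).symm

end Basic
section Part2

variable {q n : ℕ}

lemma M_reflect (a : E) :
    M n a = ∑ i ∈ Finset.range n, (X : E[X]) ^ i * C a ^ (n - 1 - i) := by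
  rw [M, ← Finset.sum_range_reflect]
  refine Finset.sum_congr rfl fun i hi => ?_
  simp only [Finset.mem_range] at hi
  have h1 : n - 1 - (n - 1 - i) = i := by omega
  rw [h1, mul_comm]

lemma M_mul {a : E} (ha : a ^ n = 1) : M n a * (X - C a) = (X : E[X]) ^ n - 1 := by
  rw [M_reflect, geom_sum₂_mul, ← map_pow, ha, map_one]

lemma eval_M (a : E) : (M n a).eval a = (n : E) * a ^ (n - 1) := by
  rw [M, eval_finset_sum]
  have : ∀ i ∈ Finset.range n, eval a (C a ^ i * X ^ (n - 1 - i)) = a ^ (n - 1) := by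
    intro i hi
    simp only [Finset.mem_range] at hi
    rw [eval_mul, eval_pow, eval_C, eval_pow, eval_X, ← pow_add]
    congr 1
    omega
  rw [Finset.sum_congr rfl this, Finset.sum_const, Finset.card_range, nsmul_eq_mul]

lemma eval_M_ne_zero {a : E} (hn : 0 < n) (hnE : (n : E) ≠ 0) (ha : a ^ n = 1) :
    (M n a).eval a ≠ 0 := by
  rw [eval_M]
  exact mul_ne_zero hnE (pow_ne_zero _ (a_ne_zero hn ha))

lemma beta_pow {a β : E} (haq : a ^ q = a) (hβ : β ^ q = a * β) :
    ∀ i, β ^ q ^ i = a ^ i * β := by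
  intro i
  induction i with
  | zero => simp
  | succ i ih =>
    rw [pow_succ, pow_mul, ih, mul_pow, hβ, ← pow_mul, mul_comm i q, pow_mul, haq,
      pow_succ, mul_assoc]

lemma G_beta {a β : E} (haq : a ^ q = a) (hβ : β ^ q = a * β) :
    G q n β = C β * M n a := by
  rw [G, M, Finset.mul_sum]
  refine Finset.sum_congr rfl fun i _ => ?_
  rw [beta_pow haq hβ i, map_mul, map_pow, mul_comm (C a ^ i) (C β), mul_assoc]

lemma P_ne_zero (hn : 0 < n) : ((X : E[X]) ^ n - 1) ≠ 0 := by
  have := X_pow_sub_C_ne_zero (R := E) hn 1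
  simpa using this

lemma D_ne_zero (hn : 0 < n) (α : E) : D q n α ≠ 0 := fun h =>
  P_ne_zero hn (EuclideanDomain.gcd_eq_zero_iff.mp h).1

lemma D_dvd_P (α : E) : D q n α ∣ (X : E[X]) ^ n - 1 := EuclideanDomain.gcd_dvd_left _ _

lemma D_dvd_G (α : E) : D q n α ∣ G q n α := EuclideanDomain.gcd_dvd_right _ _

lemma X_sub_C_dvd_D {a : E} {α : E} (ha : a ^ n = 1) (h0 : (G q n α).eval a = 0) :
    X - C a ∣ D q n α := by
  refine EuclideanDomain.dvd_gcd ?_ (dvd_iff_isRoot.mpr h0)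
  refine dvd_iff_isRoot.mpr ?_
  simp [IsRoot, ha]

lemma isUnit_of_natDegree_eq_zero {w : E[X]} (hw : w ≠ 0) (h : w.natDegree = 0) : IsUnit w := by
  rw [Polynomial.isUnit_iff_degree_eq_zero, Polynomial.degree_eq_natDegree hw, h]
  rfl

lemma D_isUnit {α : E} (hn : 0 < n) (h : (D q n α).natDegree = 0) : IsUnit (D q n α) :=
  isUnit_of_natDegree_eq_zero (D_ne_zero hn α) h

lemma eval_G_ne_zero_of_D_unit {α a : E} (hn : 0 < n) (h : (D q n α).natDegree = 0)
    (ha : a ^ n = 1) : (G q n α).eval a ≠ 0 := by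
  intro h0
  have hdvd := X_sub_C_dvd_D ha h0
  have := Polynomial.natDegree_le_of_dvd hdvd (D_ne_zero hn α)
  rw [natDegree_X_sub_C, h] at this
  omega

lemma prime_of_irred {pp : E[X]} (h : Irreducible pp) : Prime pp :=
  (UniqueFactorizationMonoid.irreducible_iff_prime).mp h

/-- If a prime divides `X - C a` then anything it divides is divisible by `X - C a`. -/
lemma X_sub_C_dvd_of_prime_dvd {pp w : E[X]} {a : E} (hp : Prime pp) (h : pp ∣ X - C a)
    (hw : pp ∣ w) : X - C a ∣ w := by
  obtain ⟨u, hu⟩ := h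
  have hcase := (irreducible_X_sub_C a).isUnit_or_isUnit hu
  have hu' : IsUnit u := hcase.resolve_left hp.not_unit
  rw [hu]
  exact (IsUnit.mul_right_dvd hu').mpr hw

end Part2
section Part3

variable {q n : ℕ}

lemma no_common_prime_M_G {a α : E} (hn : 0 < n) (hnE : (n : E) ≠ 0)
    (ha : a ^ n = 1) (h1 : (D q n α).natDegree = 1) (h0 : (G q n α).eval a = 0)
    {pp : E[X]} (hp : Prime pp) (hM : pp ∣ M n a) : ¬ pp ∣ G q n α := by
  intro hG
  obtain ⟨w, hw⟩ := X_sub_C_dvd_D ha h0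
  have hw0 : w ≠ 0 := by
    rintro rfl
    rw [mul_zero] at hw
    exact D_ne_zero hn α hw
  have hwdeg : w.natDegree = 0 := by
    have h2 := h1
    rw [hw, natDegree_mul (X_sub_C_ne_zero a) hw0, natDegree_X_sub_C] at h2
    omega
  have hwu : IsUnit w := isUnit_of_natDegree_eq_zero hw0 hwdeg
  have hpP : pp ∣ (X : E[X]) ^ n - 1 := dvd_trans hM ⟨X - C a, (M_mul ha).symm⟩
  have hpD : pp ∣ D q n α := EuclideanDomain.dvd_gcd hpP hG
  rw [hw] at hpD
  rcases hp.2.2 _ _ hpD with hc | hc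
  · have hXM : X - C a ∣ M n a := X_sub_C_dvd_of_prime_dvd hp hc hM
    exact eval_M_ne_zero hn hnE ha (dvd_iff_isRoot.mp hXM)
  · exact hp.not_unit (isUnit_of_dvd_unit hc hwu)

/-- Forward: adding a "β-type" element to a 1-normal element with root `a` gives a normal
element. -/
lemma forward (hn : 0 < n) (hnE : (n : E) ≠ 0)
    (hfrob : ∀ x y : E, (x + y) ^ q = x ^ q + y ^ q)
    {a γ α : E} (ha : a ^ n = 1) (haq : a ^ q = a) (hγ0 : γ ≠ 0) (hγ : γ ^ q = a * γ)
    (h1 : (D q n α).natDegree = 1) (h0 : (G q n α).eval a = 0) :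
    (D q n (α + γ)).natDegree = 0 := by
  have hGsum : G q n (α + γ) = G q n α + C γ * M n a := by
    rw [G_add hfrob, G_beta haq hγ]
  by_contra hne
  have hDnu : ¬ IsUnit (D q n (α + γ)) := fun hu => hne (natDegree_eq_zero_of_isUnit hu)
  obtain ⟨pp, hirr, hdvd⟩ := WfDvdMonoid.exists_irreducible_factor hDnu (D_ne_zero hn _)
  have hp := prime_of_irred hirr
  have hppP : pp ∣ (X : E[X]) ^ n - 1 := dvd_trans hdvd (D_dvd_P _)
  have hppG : pp ∣ G q n (α + γ) := dvd_trans hdvd (D_dvd_G _)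
  rw [← M_mul ha] at hppP
  rcases hp.2.2 _ _ hppP with hc | hc
  · -- pp ∣ M n a
    have hCM : pp ∣ C γ * M n a := Dvd.dvd.mul_left hc _
    have hGa : pp ∣ G q n α := by
      have h2 : pp ∣ G q n α + C γ * M n a := hGsum ▸ hppG
      have h3 := dvd_sub h2 hCM
      simpa using h3
    exact no_common_prime_M_G hn hnE ha h1 h0 hp hc hGa
  · -- pp ∣ X - C a
    have hXdvd : X - C a ∣ G q n (α + γ) := X_sub_C_dvd_of_prime_dvd hp hc hppG
    have heval : (G q n (α + γ)).eval a = 0 := dvd_iff_isRoot.mp hXdvd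
    rw [hGsum, eval_add, h0, zero_add, eval_mul, eval_C] at heval
    rcases mul_eq_zero.mp heval with h | h
    · exact hγ0 h
    · exact eval_M_ne_zero hn hnE ha h

lemma gamma_spec (hq0 : q ≠ 0) (hfrob : ∀ x y : E, (x + y) ^ q = x ^ q + y ^ q)
    (hnq : ((n : E)) ^ q = (n : E)) {a α' : E} (haq : a ^ q = a)
    (hα' : α' ^ q ^ n = α') (ha : a ^ n = 1) :
    ((G q n α').eval a / (M n a).eval a) ^ q = a * ((G q n α').eval a / (M n a).eval a) := by
  have hm : ((M n a).eval a) ^ q = (M n a).eval a := by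
    rw [eval_M, mul_pow, hnq, ← pow_mul, mul_comm (n - 1) q, pow_mul, haq]
  have hg : ((G q n α').eval a) ^ q = a * (G q n α').eval a := by
    rw [eval_G_pow_q hq0 hfrob hα' ha, haq]
  rw [div_pow, hm, hg, mul_div_assoc]

/-- Backward: subtracting the appropriate `γ` from a normal element gives a 1-normal
element with root `a`. -/
lemma backward (hn : 0 < n) (hnE : (n : E) ≠ 0) (hq0 : q ≠ 0)
    (hfrob : ∀ x y : E, (x + y) ^ q = x ^ q + y ^ q)
    (hnq : ((n : E)) ^ q = (n : E)) {a α' : E} (ha : a ^ n = 1) (haq : a ^ q = a)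
    (hα' : α' ^ q ^ n = α') (h0 : (D q n α').natDegree = 0) :
    (G q n α').eval a / (M n a).eval a ≠ 0 ∧
    ((G q n α').eval a / (M n a).eval a) ^ q = a * ((G q n α').eval a / (M n a).eval a) ∧
    (D q n (α' - (G q n α').eval a / (M n a).eval a)).natDegree = 1 ∧
    (G q n (α' - (G q n α').eval a / (M n a).eval a)).eval a = 0 := by
  have hmv : (M n a).eval a ≠ 0 := eval_M_ne_zero hn hnE ha
  have hG0 : (G q n α').eval a ≠ 0 := eval_G_ne_zero_of_D_unit hn h0 ha
  set γ : E := (G q n α').eval a / (M n a).eval a with hγdef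
  have hγ0 : γ ≠ 0 := div_ne_zero hG0 hmv
  have hγq : γ ^ q = a * γ := gamma_spec hq0 hfrob hnq haq hα' ha
  set α : E := α' - γ with hαdef
  have hsum : α + γ = α' := sub_add_cancel α' γ
  have hGα' : G q n α' = G q n α + C γ * M n a := by
    rw [← hsum, G_add hfrob, G_beta haq hγq]
  have hev : (G q n α).eval a = 0 := by
    have h2 : (G q n α').eval a = (G q n α).eval a + γ * (M n a).eval a := by
      rw [hGα', eval_add, eval_mul, eval_C]
    rw [hγdef, div_mul_cancel₀ _ hmv] at h2
    have h3 := h2.symm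
    rwa [add_eq_right] at h3
  refine ⟨hγ0, hγq, ?_, hev⟩
  obtain ⟨w, hw⟩ := X_sub_C_dvd_D ha hev
  have hw0 : w ≠ 0 := by
    rintro rfl
    rw [mul_zero] at hw
    exact D_ne_zero hn α hw
  have hwu : IsUnit w := by
    by_contra hwu
    obtain ⟨pp, hirr, hdvd⟩ := WfDvdMonoid.exists_irreducible_factor hwu hw0
    have hp := prime_of_irred hirr
    have hppD : pp ∣ D q n α := hw ▸ Dvd.dvd.mul_left hdvd _
    have hppP : pp ∣ (X : E[X]) ^ n - 1 := dvd_trans hppD (D_dvd_P _)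
    rw [← M_mul ha] at hppP
    rcases hp.2.2 _ _ hppP with hc | hc
    · -- pp ∣ M n a
      have hppG : pp ∣ G q n α := dvd_trans hppD (D_dvd_G _)
      have hppG' : pp ∣ G q n α' := by
        rw [hGα']
        exact dvd_add hppG (Dvd.dvd.mul_left hc _)
      have hppP' : pp ∣ (X : E[X]) ^ n - 1 := by
        rw [← M_mul ha]; exact hppP
      have : pp ∣ D q n α' := EuclideanDomain.dvd_gcd hppP' hppG'
      exact hp.not_unit (isUnit_of_dvd_unit this (D_isUnit hn h0))
    · -- pp ∣ X - C a
      have hXw : X - C a ∣ w := X_sub_C_dvd_of_prime_dvd hp hc hdvd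
      have hsq : (X - C a) * (X - C a) ∣ (M n a) * (X - C a) := by
        rw [M_mul ha]
        calc (X - C a) * (X - C a) ∣ (X - C a) * w := mul_dvd_mul_left _ hXw
          _ = D q n α := hw.symm
          _ ∣ (X : E[X]) ^ n - 1 := D_dvd_P _
      have hXM : X - C a ∣ M n a := (mul_dvd_mul_iff_right (X_sub_C_ne_zero a)).mp hsq
      exact eval_M_ne_zero hn hnE ha (dvd_iff_isRoot.mp hXM)
  rw [hw, natDegree_mul (X_sub_C_ne_zero a) hw0, natDegree_X_sub_C,
    natDegree_eq_zero_of_isUnit hwu]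

end Part3
section Part4

variable {q n : ℕ}

lemma exists_root_of_D_deg_one {α : E} (h1 : (D q n α).natDegree = 1) :
    ∃ a : E, a ^ n = 1 ∧ (G q n α).eval a = 0 := by
  obtain ⟨c, hc, b, hD⟩ := natDegree_eq_one.mp h1
  refine ⟨-(b / c), ?_, ?_⟩
  · obtain ⟨t, ht⟩ := D_dvd_P (q := q) (n := n) α
    have h2 := congrArg (eval (-(b / c))) ht
    rw [eval_mul, ← hD] at h2
    have h3 : eval (-(b / c)) (C c * X + C b) = 0 := by
      simp only [eval_add, eval_mul, eval_C, eval_X]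
      field_simp
      ring
    rw [h3, zero_mul, eval_sub, eval_pow, eval_X, eval_one, sub_eq_zero] at h2
    exact h2
  · obtain ⟨t, ht⟩ := D_dvd_G (q := q) (n := n) α
    have h2 := congrArg (eval (-(b / c))) ht
    rw [eval_mul, ← hD] at h2
    have h3 : eval (-(b / c)) (C c * X + C b) = 0 := by
      simp only [eval_add, eval_mul, eval_C, eval_X]
      field_simp
      ring
    rw [h3, zero_mul] at h2
    exact h2

lemma unique_root {α : E} (hn : 0 < n) (h1 : (D q n α).natDegree = 1) {a b : E}
    (ha : a ^ n = 1) (hb : b ^ n = 1) (hga : (G q n α).eval a = 0)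
    (hgb : (G q n α).eval b = 0) : a = b := by
  by_contra hne
  have hcop : IsCoprime (X - C a) (X - C b : E[X]) :=
    isCoprime_X_sub_C_of_isUnit_sub (isUnit_iff_ne_zero.mpr (sub_ne_zero_of_ne hne))
  have h2 : (X - C a) * (X - C b) ∣ D q n α :=
    hcop.mul_dvd (X_sub_C_dvd_D ha hga) (X_sub_C_dvd_D hb hgb)
  have h3 := natDegree_le_of_dvd h2 (D_ne_zero hn α)
  rw [natDegree_mul (X_sub_C_ne_zero a) (X_sub_C_ne_zero b), natDegree_X_sub_C,
    natDegree_X_sub_C, h1] at h3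
  omega

lemma root_fixed (hn : 0 < n) (hq0 : q ≠ 0)
    (hfrob : ∀ x y : E, (x + y) ^ q = x ^ q + y ^ q)
    {α a : E} (hα : α ^ q ^ n = α) (h1 : (D q n α).natDegree = 1)
    (ha : a ^ n = 1) (hga : (G q n α).eval a = 0) : a ^ q = a := by
  have hb : (a ^ q) ^ n = 1 := by rw [← pow_mul, mul_comm, pow_mul, ha, one_pow]
  have hgb : (G q n α).eval (a ^ q) = 0 := by
    have h2 := eval_G_pow_q hq0 hfrob hα ha
    rw [hga, zero_pow hq0] at h2
    have haq : (a : E) ^ q ≠ 0 := pow_ne_zero _ (a_ne_zero hn ha)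
    exact ((mul_eq_zero.mp h2.symm).resolve_left haq)
  exact unique_root hn h1 hb ha hgb hga

end Part4
section Part5

variable {q n : ℕ}

lemma geom_nat (hq : 1 ≤ q) : ∀ m : ℕ, (q - 1) * (∑ i ∈ Finset.range m, q ^ i) = q ^ m - 1 := by
  intro m
  induction m with
  | zero => simp
  | succ m ih =>
    rw [Finset.sum_range_succ, Nat.mul_add, ih, Nat.sub_one_mul, pow_succ]
    have h1 : 1 ≤ q ^ m := Nat.one_le_pow _ _ hq
    have h2 : q ^ m ≤ q ^ m * q := Nat.le_mul_of_pos_right _ hq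
    have h3 : q * q ^ m = q ^ m * q := mul_comm _ _
    omega

lemma exists_beta (hn : 0 < n) (hq2 : 2 ≤ q) (hEcard : Fintype.card E = q ^ n)
    {a : E} (ha : a ^ n = 1) (haq : a ^ q = a) : ∃ β : E, β ≠ 0 ∧ β ^ q = a * β := by
  have ha0 : a ≠ 0 := a_ne_zero hn ha
  set au : Eˣ := Units.mk0 a ha0 with hau
  obtain ⟨ζ, hζ⟩ := IsCyclic.exists_generator (α := Eˣ)
  have horder : orderOf ζ = q ^ n - 1 := by
    rw [orderOf_eq_card_of_forall_mem_zpowers hζ, Nat.card_units, Nat.card_eq_fintype_card, hEcard]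
  obtain ⟨k, hk⟩ : ∃ k : ℕ, ζ ^ k = au := by
    have h2 := hζ au
    rw [← (isOfFinOrder_of_finite ζ).mem_powers_iff_mem_zpowers] at h2
    obtain ⟨k, hk⟩ := h2
    exact ⟨k, hk⟩
  set Mv := ∑ i ∈ Finset.range n, q ^ i with hMv
  have hauM : au ^ Mv = 1 := by
    have hval : a ^ Mv = 1 := by
      have haqi : ∀ i : ℕ, a ^ q ^ i = a := by
        intro i
        induction i with
        | zero => simp
        | succ i ih => rw [pow_succ, pow_mul, ih, haq]
      rw [hMv, ← Finset.prod_pow_eq_pow_sum]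
      rw [Finset.prod_congr rfl (fun i _ => haqi i), Finset.prod_const, Finset.card_range, ha]
    ext
    rw [Units.val_pow_eq_pow_val, Units.val_one]
    exact hval
  have hMdvd : q ^ n - 1 ∣ k * Mv := by
    have h3 : ζ ^ (k * Mv) = 1 := by rw [pow_mul, hk, hauM]
    have h4 := orderOf_dvd_of_pow_eq_one h3
    rwa [horder] at h4
  have hMpos : 0 < Mv := by
    have h5 : q ^ 0 ≤ Mv := Finset.single_le_sum (f := fun i => q ^ i)
      (fun i _ => Nat.zero_le _) (Finset.mem_range.mpr hn)
    simp at h5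
    omega
  have hgeom : (q - 1) * Mv = q ^ n - 1 := geom_nat (by omega) n
  have hdvd : (q - 1) ∣ k := by
    rw [← hgeom] at hMdvd
    have h6 : (q - 1) * Mv ∣ k * Mv := hMdvd
    rw [mul_comm (q-1) Mv, mul_comm k Mv] at h6
    have h7 := (Nat.mul_dvd_mul_iff_left hMpos).mp h6
    exact h7
  obtain ⟨j, hj⟩ := hdvd
  refine ⟨((ζ ^ j : Eˣ) : E), Units.ne_zero _, ?_⟩
  have hβ : ((ζ ^ j : Eˣ) : E) ^ (q - 1) = a := by
    have h8 : (ζ ^ j) ^ (q - 1) = au := by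
      rw [← pow_mul, mul_comm j (q - 1), ← hj, hk]
    rw [← Units.val_pow_eq_pow_val, h8]
    rfl
  have hq1 : q - 1 + 1 = q := by omega
  calc ((ζ ^ j : Eˣ) : E) ^ q = ((ζ ^ j : Eˣ) : E) ^ (q - 1) * ((ζ ^ j : Eˣ) : E) := by
        rw [← pow_succ, hq1]
    _ = a * ((ζ ^ j : Eˣ) : E) := by rw [hβ]

end Part5
section Part6

variable {q n : ℕ}

lemma card_pow_eq_one_le [DecidableEq E] {m : ℕ} (hm : 0 < m) :
    (Finset.univ.filter fun a : E => a ^ m = 1).card ≤ m := by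
  have hW0 : ((X : E[X]) ^ m - C 1) ≠ 0 := X_pow_sub_C_ne_zero hm 1
  have hsub : (Finset.univ.filter fun a : E => a ^ m = 1) ⊆
      ((X : E[X]) ^ m - C 1).roots.toFinset := by
    intro t ht
    rw [Multiset.mem_toFinset, mem_roots hW0]
    simp only [Finset.mem_filter, Finset.mem_univ, true_and] at ht
    simp [IsRoot, ht]
  calc (Finset.univ.filter fun a : E => a ^ m = 1).card
      ≤ ((X : E[X]) ^ m - C 1).roots.toFinset.card := Finset.card_le_card hsub
    _ ≤ Multiset.card ((X : E[X]) ^ m - C 1).roots := Multiset.toFinset_card_le _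
    _ ≤ ((X : E[X]) ^ m - C 1).natDegree := card_roots' _
    _ = m := natDegree_X_pow_sub_C

lemma card_fix [DecidableEq E] (hq2 : 2 ≤ q)
    (hge : q ≤ (Finset.univ.filter fun t : E => t ^ q = t).card) :
    (Finset.univ.filter fun t : E => t ^ q = t).card = q := by
  refine le_antisymm ?_ hge
  have hWdeg : ((X : E[X]) ^ q - X).natDegree = q := by
    rw [natDegree_sub_eq_left_of_natDegree_lt] <;>
      simp [natDegree_X_pow] <;> omega
  have hW0 : ((X : E[X]) ^ q - X) ≠ 0 := by
    intro h
    rw [h] at hWdeg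
    simp at hWdeg
    omega
  have hsub : (Finset.univ.filter fun t : E => t ^ q = t) ⊆
      ((X : E[X]) ^ q - X).roots.toFinset := by
    intro t ht
    rw [Multiset.mem_toFinset, mem_roots hW0]
    simp only [Finset.mem_filter, Finset.mem_univ, true_and] at ht
    simp [IsRoot, sub_eq_zero, ht]
  calc (Finset.univ.filter fun t : E => t ^ q = t).card
      ≤ ((X : E[X]) ^ q - X).roots.toFinset.card := Finset.card_le_card hsub
    _ ≤ Multiset.card ((X : E[X]) ^ q - X).roots := Multiset.toFinset_card_le _
    _ ≤ ((X : E[X]) ^ q - X).natDegree := card_roots' _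
    _ = q := hWdeg

lemma card_T [DecidableEq E] (hq2 : 2 ≤ q)
    (hfix : (Finset.univ.filter fun t : E => t ^ q = t).card = q)
    {a β : E} (ha0 : a ≠ 0) (hβ0 : β ≠ 0) (hβ : β ^ q = a * β) :
    (Finset.univ.filter fun γ : E => γ ≠ 0 ∧ γ ^ q = a * γ).card = q - 1 := by
  have h0mem : (0 : E) ∈ Finset.univ.filter fun t : E => t ^ q = t := by
    simp [zero_pow (by omega : q ≠ 0)]
  have herase := Finset.card_erase_add_one h0mem
  have hcard : ((Finset.univ.filter fun t : E => t ^ q = t).erase 0).card = q - 1 := by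
    omega
  rw [← hcard]
  apply Finset.card_bij' (i := fun γ _ => γ / β) (j := fun t _ => t * β)
  · -- i maps into erase set
    intro γ hγ
    simp only [Finset.mem_filter, Finset.mem_univ, true_and] at hγ
    obtain ⟨hγ0, hγq⟩ := hγ
    rw [Finset.mem_erase]
    constructor
    · exact div_ne_zero hγ0 hβ0
    · simp only [Finset.mem_filter, Finset.mem_univ, true_and]
      rw [div_pow, hγq, hβ, mul_div_mul_left _ _ ha0]
  · -- j maps into filter set
    intro t ht
    rw [Finset.mem_erase] at ht
    obtain ⟨ht0, htq⟩ := ht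
    simp only [Finset.mem_filter, Finset.mem_univ, true_and] at htq ⊢
    refine ⟨mul_ne_zero ht0 hβ0, ?_⟩
    rw [mul_pow, htq, hβ, mul_left_comm]
  · intro γ hγ
    simp only [Finset.mem_filter, Finset.mem_univ, true_and] at hγ
    exact div_mul_cancel₀ _ hβ0
  · intro t ht
    exact mul_div_cancel_right₀ _ hβ0

lemma card_mu [DecidableEq E] (hn : 0 < n) (hq2 : 2 ≤ q) (hEcard : Fintype.card E = q ^ n) :
    (Finset.univ.filter fun a : E => a ^ n = 1 ∧ a ^ q = a).card = Nat.gcd (q - 1) n := by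
  set g := Nat.gcd (q - 1) n with hg
  have hg_pos : 0 < g := Nat.gcd_pos_of_pos_right _ hn
  have hgn : g ∣ n := Nat.gcd_dvd_right _ _
  have hgq : g ∣ q - 1 := Nat.gcd_dvd_left _ _
  have hset : (Finset.univ.filter fun a : E => a ^ n = 1 ∧ a ^ q = a)
      = (Finset.univ.filter fun a : E => a ^ g = 1) := by
    ext a
    simp only [Finset.mem_filter, Finset.mem_univ, true_and]
    constructor
    · rintro ⟨h1, h2⟩
      have ha0 : a ≠ 0 := a_ne_zero hn h1
      have hq1 : a ^ (q - 1) = 1 := by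
        have hmul : a ^ (q - 1) * a = a := by
          rw [← pow_succ]
          have : q - 1 + 1 = q := by omega
          rw [this, h2]
        have := mul_right_cancel₀ ha0 (hmul.trans (one_mul a).symm)
        exact this
      have o1 : orderOf a ∣ n := orderOf_dvd_of_pow_eq_one h1
      have o2 : orderOf a ∣ q - 1 := orderOf_dvd_of_pow_eq_one hq1
      exact orderOf_dvd_iff_pow_eq_one.mp (Nat.dvd_gcd o2 o1)
    · intro h
      constructor
      · obtain ⟨c, hc⟩ := hgn
        rw [hc, pow_mul, h, one_pow]
      · have hq1 : a ^ (q - 1) = 1 := by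
          obtain ⟨c, hc⟩ := hgq
          rw [hc, pow_mul, h, one_pow]
        have : q - 1 + 1 = q := by omega
        calc a ^ q = a ^ (q - 1 + 1) := by rw [this]
          _ = a ^ (q - 1) * a := pow_succ _ _
          _ = a := by rw [hq1, one_mul]
  rw [hset]
  refine le_antisymm (card_pow_eq_one_le hg_pos) ?_
  -- lower bound: exhibit g distinct g-th roots of unity
  obtain ⟨ζ, hζ⟩ := IsCyclic.exists_generator (α := Eˣ)
  have horder : orderOf ζ = q ^ n - 1 := by
    rw [orderOf_eq_card_of_forall_mem_zpowers hζ, Nat.card_units, Nat.card_eq_fintype_card, hEcard]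
  have hq1dvd : q - 1 ∣ q ^ n - 1 := ⟨_, (geom_nat (by omega) n).symm⟩
  have hgN : g ∣ q ^ n - 1 := hgq.trans hq1dvd
  have hN0 : q ^ n - 1 ≠ 0 := by
    have : 2 ^ n ≤ q ^ n := Nat.pow_le_pow_left hq2 n
    have : 2 ^ 1 ≤ 2 ^ n := Nat.pow_le_pow_right (by omega) hn
    omega
  set ξ : Eˣ := ζ ^ ((q ^ n - 1) / g) with hξ
  have hξord : orderOf ξ = g := by
    rw [hξ, ← horder]
    exact orderOf_pow_orderOf_div (by rw [horder]; exact hN0) (by rw [horder]; exact hgN)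
  have hinj : Set.InjOn (fun i : ℕ => ((ξ ^ i : Eˣ) : E)) ↑(Finset.range g) := by
    intro i hi j hj hij
    simp only [Finset.coe_range, Set.mem_Iio] at hi hj
    have : ξ ^ i = ξ ^ j := Units.ext hij
    exact pow_injOn_Iio_orderOf (by rw [hξord]; exact hi) (by rw [hξord]; exact hj) this
  have hsub : (Finset.range g).image (fun i : ℕ => ((ξ ^ i : Eˣ) : E)) ⊆
      Finset.univ.filter fun a : E => a ^ g = 1 := by
    intro x hx
    simp only [Finset.mem_image, Finset.mem_range] at hx
    obtain ⟨i, hi, rfl⟩ := hx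
    simp only [Finset.mem_filter, Finset.mem_univ, true_and]
    have : (ξ ^ i) ^ g = 1 := by
      rw [← pow_mul, mul_comm i g, pow_mul, ← hξord, pow_orderOf_eq_one, one_pow]
    have h9 := congrArg Units.val this
    simpa using h9
  calc g = ((Finset.range g).image (fun i : ℕ => ((ξ ^ i : Eˣ) : E))).card := by
        rw [Finset.card_image_of_injOn hinj, Finset.card_range]
    _ ≤ _ := Finset.card_le_card hsub

end Part6
section Part7

variable {q n : ℕ}

theorem key_count [DecidableEq E] (hn : 0 < n) (hq2 : 2 ≤ q)
    (hEcard : Fintype.card E = q ^ n)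
    (hfrob : ∀ x y : E, (x + y) ^ q = x ^ q + y ^ q)
    (hnE : (n : E) ≠ 0) (hnq : ((n : E)) ^ q = (n : E))
    (hfix : (Finset.univ.filter fun t : E => t ^ q = t).card = q) :
    (q - 1) * (Finset.univ.filter fun α : E => (D q n α).natDegree = 1).card
      = Nat.gcd (q - 1) n * (Finset.univ.filter fun α : E => (D q n α).natDegree = 0).card := by
  have hq0 : q ≠ 0 := by omega
  set A1 : Finset E := Finset.univ.filter fun α : E => (D q n α).natDegree = 1 with hA1
  set A0 : Finset E := Finset.univ.filter fun α : E => (D q n α).natDegree = 0 with hA0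
  set μf : Finset E := Finset.univ.filter fun a : E => a ^ n = 1 ∧ a ^ q = a with hμf
  have hα_pow : ∀ α : E, α ^ q ^ n = α := fun α => by
    rw [← hEcard]; exact FiniteField.pow_card α
  set f : E → Finset E := fun a => A1.filter fun α => (G q n α).eval a = 0 with hfdef
  -- Step A : partition of A1
  have hpart : A1 = μf.biUnion f := by
    ext α
    simp only [hfdef, Finset.mem_biUnion, Finset.mem_filter, Finset.mem_univ, true_and, hA1, hμf]
    constructor
    · intro h1
      obtain ⟨a, ha, hga⟩ := exists_root_of_D_deg_one h1
      have haq : a ^ q = a := root_fixed hn hq0 hfrob (hα_pow α) h1 ha hga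
      exact ⟨a, ⟨ha, haq⟩, h1, hga⟩
    · rintro ⟨a, _, h1, _⟩
      exact h1
  have hdisj : ∀ x ∈ μf, ∀ y ∈ μf, x ≠ y → Disjoint (f x) (f y) := by
    intro x hx y hy hxy
    rw [Finset.disjoint_left]
    intro α hαx hαy
    simp only [hfdef, Finset.mem_filter, Finset.mem_univ, true_and, hA1] at hαx hαy
    simp only [hμf, Finset.mem_filter, Finset.mem_univ, true_and] at hx hy
    exact hxy (unique_root hn hαx.1 hx.1 hy.1 hαx.2 hαy.2)
  -- Step C : for each a ∈ μf, A0.card = (q - 1) * (f a).card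
  have hstepC : ∀ a ∈ μf, A0.card = (q - 1) * (f a).card := by
    intro a ha
    simp only [hμf, Finset.mem_filter, Finset.mem_univ, true_and] at ha
    obtain ⟨han, haq⟩ := ha
    have ha0 : a ≠ 0 := a_ne_zero hn han
    obtain ⟨β, hβ0, hβq⟩ := exists_beta hn hq2 hEcard han haq
    set T : Finset E := Finset.univ.filter fun γ : E => γ ≠ 0 ∧ γ ^ q = a * γ with hT
    have hTcard : T.card = q - 1 := card_T hq2 hfix ha0 hβ0 hβq
    have hmv : (M n a).eval a ≠ 0 := eval_M_ne_zero hn hnE han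
    have hbij : (T ×ˢ f a).card = A0.card := by
      apply Finset.card_bij'
        (i := fun p _ => p.2 + p.1)
        (j := fun α' _ => ((G q n α').eval a / (M n a).eval a,
          α' - (G q n α').eval a / (M n a).eval a))
      · rintro ⟨γ, α⟩ hp
        rw [Finset.mem_product] at hp
        obtain ⟨hγ, hα⟩ := hp
        simp only [hT, Finset.mem_filter, Finset.mem_univ, true_and] at hγ
        simp only [hfdef, Finset.mem_filter, Finset.mem_univ, true_and, hA1] at hα
        simp only [hA0, Finset.mem_filter, Finset.mem_univ, true_and]
        exact forward hn hnE hfrob han haq hγ.1 hγ.2 hα.1 hα.2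
      · intro α' hα'
        simp only [hA0, Finset.mem_filter, Finset.mem_univ, true_and] at hα'
        obtain ⟨hγ0, hγq, h1, h0⟩ :=
          backward hn hnE hq0 hfrob hnq han haq (hα_pow α') hα'
        rw [Finset.mem_product]
        constructor
        · simp only [hT, Finset.mem_filter, Finset.mem_univ, true_and]
          exact ⟨hγ0, hγq⟩
        · simp only [hfdef, Finset.mem_filter, Finset.mem_univ, true_and, hA1]
          exact ⟨h1, h0⟩
      · rintro ⟨γ, α⟩ hp
        rw [Finset.mem_product] at hp
        obtain ⟨hγ, hα⟩ := hp
        simp only [hT, Finset.mem_filter, Finset.mem_univ, true_and] at hγ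
        simp only [hfdef, Finset.mem_filter, Finset.mem_univ, true_and, hA1] at hα
        have hev : (G q n (α + γ)).eval a = γ * (M n a).eval a := by
          rw [G_add hfrob, G_beta haq hγ.2, eval_add, hα.2, zero_add, eval_mul, eval_C]
        have hγval : (G q n (α + γ)).eval a / (M n a).eval a = γ := by
          rw [hev, mul_div_cancel_right₀ _ hmv]
        ext
        · simp only [hγval]
        · simp only [hγval, add_sub_cancel_right]
      · intro α' hα'
        simp only [sub_add_cancel]
    have hprod : T.card * (f a).card = A0.card := by
      rw [← Finset.card_product]; exact hbij
    rw [← hprod, hTcard]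
  -- assemble
  calc (q - 1) * A1.card = (q - 1) * ∑ a ∈ μf, (f a).card := by
        rw [hpart, Finset.card_biUnion hdisj]
    _ = ∑ a ∈ μf, (q - 1) * (f a).card := by rw [Finset.mul_sum]
    _ = ∑ _a ∈ μf, A0.card := Finset.sum_congr rfl fun a ha => (hstepC a ha).symm
    _ = μf.card * A0.card := by rw [Finset.sum_const, smul_eq_mul]
    _ = Nat.gcd (q - 1) n * A0.card := by rw [hμf, card_mu hn hq2 hEcard]

end Part7

end Stmt15

open Stmt15 in
/-- For `gcd(n, q) = 1`, `N₁ = (v₁ / (q - 1)) * N₀` where `v₁ = gcd(q - 1, n)`. -/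
theorem stmt15 (F E : Type*) [Field F] [Field E] [Algebra F E] [Fintype F] [Fintype E]
    [DecidableEq E[X]] (q n : ℕ)
    (hq : Fintype.card F = q) (hfin : Module.finrank F E = n) (hn : 0 < n)
    (hcop : Nat.Coprime n q) :
    (({α : E | (EuclideanDomain.gcd ((X : E[X]) ^ n - 1)
        (∑ i ∈ Finset.range n, C (α ^ q ^ i) * X ^ (n - 1 - i))).natDegree = 1}).ncard : ℚ) =
      ((Nat.gcd (q - 1) n : ℚ) / ((q : ℚ) - 1)) *
      (({α : E | (EuclideanDomain.gcd ((X : E[X]) ^ n - 1)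
        (∑ i ∈ Finset.range n, C (α ^ q ^ i) * X ^ (n - 1 - i))).natDegree = 0}).ncard : ℚ) := by
  have hdE : DecidableEq E := Classical.decEq E
  -- basic facts
  have hq2 : 2 ≤ q := hq ▸ Fintype.one_lt_card
  have hEcard : Fintype.card E = q ^ n := by
    rw [Module.card_eq_pow_finrank (K := F) (V := E), hq, hfin]
  -- characteristic
  set p := ringChar F with hp
  haveI : CharP F p := ringChar.charP F
  obtain ⟨m, hpprime, hqpm⟩ := FiniteField.card F p
  rw [hq] at hqpm
  haveI : Fact p.Prime := ⟨hpprime⟩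
  haveI : CharP E p := charP_of_injective_algebraMap (algebraMap F E).injective p
  have hfrob : ∀ x y : E, (x + y) ^ q = x ^ q + y ^ q := by
    intro x y
    rw [hqpm]
    exact add_pow_char_pow x y p m
  have hpq : p ∣ q := by
    rw [hqpm]
    exact dvd_pow_self p (by positivity : (m : ℕ) ≠ 0)
  have hnE : (n : E) ≠ 0 := by
    intro h
    have hpn : p ∣ n := (CharP.cast_eq_zero_iff E p n).mp h
    have hdg : p ∣ Nat.gcd n q := Nat.dvd_gcd hpn hpq
    have h1 : Nat.gcd n q = 1 := hcop
    rw [h1] at hdg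
    exact hpprime.ne_one (Nat.dvd_one.mp hdg)
  have hnq : ((n : E)) ^ q = (n : E) := by
    rw [hqpm]
    have := map_natCast (iterateFrobenius E p m) n
    rwa [iterateFrobenius_def] at this
  have hfix : (Finset.univ.filter fun t : E => t ^ q = t).card = q := by
    apply card_fix hq2
    have himg : (Finset.univ.image (algebraMap F E)).card = q := by
      rw [Finset.card_image_of_injective _ (algebraMap F E).injective, Finset.card_univ, hq]
    have hsub : (Finset.univ.image (algebraMap F E)) ⊆
        Finset.univ.filter fun t : E => t ^ q = t := by
      intro x hx
      simp only [Finset.mem_image, Finset.mem_univ, true_and] at hx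
      obtain ⟨c, rfl⟩ := hx
      simp only [Finset.mem_filter, Finset.mem_univ, true_and]
      rw [← map_pow]
      congr 1
      rw [← hq]
      exact FiniteField.pow_card c
    calc q = (Finset.univ.image (algebraMap F E)).card := himg.symm
      _ ≤ _ := Finset.card_le_card hsub
  have hkey := key_count (q := q) (n := n) hn hq2 hEcard hfrob hnE hnq hfix
  -- identify sets with finsets
  have hset1 : {α : E | (EuclideanDomain.gcd ((X : E[X]) ^ n - 1)
      (∑ i ∈ Finset.range n, C (α ^ q ^ i) * X ^ (n - 1 - i))).natDegree = 1}
      = ↑(Finset.univ.filter fun α : E => (D q n α).natDegree = 1) := by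
    ext α
    simp [D, G]
  have hset0 : {α : E | (EuclideanDomain.gcd ((X : E[X]) ^ n - 1)
      (∑ i ∈ Finset.range n, C (α ^ q ^ i) * X ^ (n - 1 - i))).natDegree = 0}
      = ↑(Finset.univ.filter fun α : E => (D q n α).natDegree = 0) := by
    ext α
    simp [D, G]
  rw [hset1, hset0, Set.ncard_coe_finset, Set.ncard_coe_finset]
  have hne : ((q : ℚ) - 1) ≠ 0 := by
    have : (2 : ℚ) ≤ (q : ℚ) := by exact_mod_cast hq2
    intro h
    nlinarith
  have hcast : ((q : ℚ) - 1) * ((Finset.univ.filter fun α : E => (D q n α).natDegree = 1).card : ℚ)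
      = (Nat.gcd (q - 1) n : ℚ) *
        ((Finset.univ.filter fun α : E => (D q n α).natDegree = 0).card : ℚ) := by
    have hc := congrArg (Nat.cast : ℕ → ℚ) hkey
    push_cast [Nat.cast_sub (show 1 ≤ q by omega)] at hc
    exact hc
  rw [div_mul_eq_mul_div, eq_div_iff hne]
  linear_combination hcast
end
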